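/- arXiv:2407.20744 — 8 statements merged into one kernel-verified Lean document; each statement's English description precedes it below -/
import Mathlib

section
/- For any real random variable X with finite variance σ² and density bounded by M (i.e. ess sup of the density equals M), one has M²σ² ≥ 1/12. -/
open MeasureTheory

/-- For a real random variable with density `p` bounded with essential supremum `M`
and variance `σ²`, one has `M² σ² ≥ 1/12`. -/
theorem maxDensity_sq_mul_variance_ge (p : ℝ → ℝ) (hp : Measurable p)
    (hp0 : ∀ x, 0 ≤ p x) (hp1 : ∫ x, p x = 1)
    (μ σ M : ℝ)
    (hμ : μ = ∫ x, x * p x)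
    (hσ : σ ^ 2 = ∫ x, (x - μ) ^ 2 * p x)
    (hint1 : Integrable fun x => x * p x)
    (hint2 : Integrable fun x => (x - μ) ^ 2 * p x)
    (hM : essSup p volume = M)
    (hMbd : ∀ᵐ x ∂volume, p x ≤ M) :
    M ^ 2 * σ ^ 2 ≥ 1 / 12 := by
  -- p is integrable
  have hpint : Integrable p := by
    by_contra h
    rw [integral_undef h] at hp1
    norm_num at hp1
  -- M > 0
  have hMpos : 0 < M := by
    by_contra h
    push_neg at h
    have hzero : ∀ᵐ x ∂(volume : Measure ℝ), p x = 0 := by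
      filter_upwards [hMbd] with x hx
      exact le_antisymm (hx.trans h) (hp0 x)
    rw [integral_congr_ae hzero, integral_zero] at hp1
    norm_num at hp1
  set c : ℝ := 1 / (2 * M) with hc
  have hcpos : 0 < c := by positivity
  set I : Set ℝ := Set.Icc (μ - c) (μ + c) with hI
  set g : ℝ → ℝ := I.indicator (fun x => ((x - μ) ^ 2 - c ^ 2) * M) with hg
  have hgint : Integrable g := by
    apply (ContinuousOn.integrableOn_Icc (by fun_prop)).integrable_indicator
    exact measurableSet_Icc
  -- pointwise a.e. inequality
  have hptwise : ∀ᵐ x ∂(volume : Measure ℝ),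
      c ^ 2 * p x + g x ≤ (x - μ) ^ 2 * p x := by
    filter_upwards [hMbd] with x hx
    by_cases hxI : x ∈ I
    · rw [hg, Set.indicator_of_mem hxI]
      obtain ⟨h1, h2⟩ := hxI
      have hsq : (x - μ) ^ 2 ≤ c ^ 2 := by nlinarith
      nlinarith [hp0 x]
    · rw [hg, Set.indicator_of_notMem hxI]
      have : c ^ 2 ≤ (x - μ) ^ 2 := by
        rcases not_and_or.mp hxI with h | h
        · push_neg at h; nlinarith
        · push_neg at h; nlinarith
      nlinarith [hp0 x]
  -- integral inequality
  have hineq : c ^ 2 + ∫ x, g x ≤ σ ^ 2 := by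
    rw [hσ]
    calc c ^ 2 + ∫ x, g x = ∫ x, (c ^ 2 * p x + g x) := by
          rw [integral_add ((hpint.const_mul _)) hgint, integral_const_mul, hp1, mul_one]
      _ ≤ ∫ x, (x - μ) ^ 2 * p x :=
          integral_mono_ae ((hpint.const_mul _).add hgint) hint2 hptwise
  -- compute ∫ g
  have hgval : ∫ x, g x = -(4 / 3) * M * c ^ 3 := by
    rw [hg, integral_indicator measurableSet_Icc,
      MeasureTheory.integral_Icc_eq_integral_Ioc,
      ← intervalIntegral.integral_of_le (by linarith : μ - c ≤ μ + c)]
    have : ∀ x ∈ Set.uIcc (μ - c) (μ + c), HasDerivAt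
        (fun x => ((x - μ) ^ 3 / 3 - c ^ 2 * x) * M)
        (((x - μ) ^ 2 - c ^ 2) * M) x := by
      intro x _
      have : HasDerivAt (fun x : ℝ => ((x - μ) ^ 3 / 3 - c ^ 2 * x))
          ((x - μ) ^ 2 - c ^ 2) x := by
        have h1 : HasDerivAt (fun x : ℝ => (x - μ) ^ 3 / 3) ((x - μ) ^ 2) x := by
          have := ((hasDerivAt_id x).sub_const μ).pow 3
          simpa using this.div_const 3
        simpa using h1.fun_sub ((hasDerivAt_id x).const_mul (c ^ 2))
      exact this.mul_const M
    rw [intervalIntegral.integral_eq_sub_of_hasDerivAt this ((Continuous.mul (by fun_prop) continuous_const).intervalIntegrable _ _)]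
    ring
  -- conclude
  have hkey : 1 / (12 * M ^ 2) ≤ σ ^ 2 := by
    have : c ^ 2 + -(4 / 3) * M * c ^ 3 = 1 / (12 * M ^ 2) := by
      rw [hc]; field_simp; ring
    rw [← this, ← hgval]; exact hineq
  rw [ge_iff_le, div_le_iff₀ (by norm_num : (0:ℝ) < 12)] at *
  have h12 : 0 < 12 * M ^ 2 := by positivity
  rw [div_le_iff₀ h12] at hkey
  nlinarith
end

section
/- For any non-negative Borel measurable function q on the real line, (ess sup q)² · ∫ x² q(x) dx ≥ (1/12) (∫ q(x) dx)³. -/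
open MeasureTheory ENNReal

lemma aux_bathtub_integral (r : ℝ) (hr : 0 < r) :
    ∫⁻ x : ℝ, ENNReal.ofReal (max (r^2 - x^2) 0) = ENNReal.ofReal (4/3 * r^3) := by
  set g : ℝ → ℝ := fun x => max (r^2 - x^2) 0 with hg
  have hcont : Continuous g := (continuous_const.sub (continuous_pow 2)).max continuous_const
  have hzero : ∀ x, x ∉ Set.Icc (-r) r → g x = 0 := by
    intro x hx
    simp only [hg, max_eq_right_iff, sub_nonpos]
    by_contra h
    push_neg at h
    have hx2 : x^2 ≤ r^2 := le_of_lt h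
    exact hx ⟨by nlinarith [sq_nonneg (x + r)], by nlinarith [sq_nonneg (x - r)]⟩
  have hint : Integrable g := by
    apply hcont.integrable_of_hasCompactSupport
    exact HasCompactSupport.intro isCompact_Icc hzero
  rw [← ofReal_integral_eq_lintegral_ofReal hint (ae_of_all _ fun x => le_max_right _ _)]
  congr 1
  rw [← setIntegral_eq_integral_of_forall_compl_eq_zero hzero,
      integral_Icc_eq_integral_Ioc, ← intervalIntegral.integral_of_le (by linarith : -r ≤ r)]
  have : ∫ x in (-r)..r, g x = ∫ x in (-r)..r, (r^2 - x^2) := by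
    apply intervalIntegral.integral_congr
    intro x hx
    rw [Set.uIcc_of_le (by linarith : -r ≤ r)] at hx
    simp only [hg]
    rw [max_eq_left]
    nlinarith [hx.1, hx.2]
  rw [this, intervalIntegral.integral_sub intervalIntegrable_const
    (intervalIntegral.intervalIntegrable_pow 2)]
  simp [integral_pow]
  ring

set_option maxHeartbeats 1000000 in
/-- For any non-negative Borel measurable function `q` on the real line,
`(ess sup q)² · ∫ x² q(x) dx ≥ (1/12) (∫ q(x) dx)³`. -/
theorem essSup_sq_mul_secondMoment_ge (q : ℝ → ℝ) (hq : Measurable q)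
    (hq0 : ∀ x, 0 ≤ q x) :
    (essSup (fun x => ENNReal.ofReal (q x)) volume) ^ 2
      * ∫⁻ x, ENNReal.ofReal (x ^ 2 * q x)
      ≥ (∫⁻ x, ENNReal.ofReal (q x)) ^ 3 / 12 := by
  set S := essSup (fun x => ENNReal.ofReal (q x)) volume with hS
  set m := ∫⁻ x, ENNReal.ofReal (q x) with hm
  set I := ∫⁻ x, ENNReal.ofReal (x ^ 2 * q x) with hI
  have hle : ∀ᵐ x : ℝ, ENNReal.ofReal (q x) ≤ S := ENNReal.ae_le_essSup _
  have hmeasq : Measurable fun x : ℝ => ENNReal.ofReal (q x) := by measurability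
  have hmeasI : Measurable fun x : ℝ => ENNReal.ofReal (x ^ 2 * q x) := by measurability
  -- case S = 0 : then q = 0 a.e.
  rcases eq_or_ne S 0 with hS0 | hS0
  · have hm0 : m = 0 := by
      rw [hm, lintegral_eq_zero_iff hmeasq]
      filter_upwards [hle] with x hx
      simpa [hS0] using hx
    simp [hm0]
  rcases eq_or_ne S ⊤ with hStop | hStop
  · -- case S = ∞
    rcases eq_or_ne I 0 with hI0 | hI0
    · -- second moment zero forces q = 0 a.e.
      have hae : ∀ᵐ x : ℝ, ENNReal.ofReal (x ^ 2 * q x) = 0 :=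
        (lintegral_eq_zero_iff hmeasI).mp hI0
      have h0 : ∀ᵐ x : ℝ, x ≠ (0:ℝ) := by
        have := Real.volume_singleton (a := (0:ℝ))
        rw [← compl_mem_ae_iff] at this
        exact this
      have hm0 : m = 0 := by
        rw [hm, lintegral_eq_zero_iff hmeasq]
        filter_upwards [hae, h0] with x hx hx0
        rw [ENNReal.ofReal_eq_zero] at hx
        show ENNReal.ofReal (q x) = 0
        rw [ENNReal.ofReal_eq_zero]
        have hx2 : 0 < x ^ 2 := by positivity
        nlinarith [hq0 x]
      simp [hm0]
    · rw [hStop]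
      simp [ENNReal.top_pow, ENNReal.top_mul hI0]
  -- now S is finite and positive
  set M := S.toReal with hMdef
  have hMpos : 0 < M := ENNReal.toReal_pos hS0 hStop
  have hSM : S = ENNReal.ofReal M := (ENNReal.ofReal_toReal hStop).symm
  have hqM : ∀ᵐ x : ℝ, q x ≤ M := by
    filter_upwards [hle] with x hx
    rw [hSM, ENNReal.ofReal_le_ofReal_iff hMpos.le] at hx
    exact hx
  rcases eq_or_ne m ⊤ with hmtop | hmtop
  · -- m = ∞ forces I = ∞ since q is essentially bounded
    have hItop : I = ⊤ := by
      set A : Set ℝ := {x | 1 ≤ x ^ 2} with hA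
      have hAmeas : MeasurableSet A := measurableSet_le measurable_const (by measurability)
      have hcompl : ∫⁻ x in Aᶜ, ENNReal.ofReal (q x) ≠ ⊤ := by
        have h1 : ∫⁻ x in Aᶜ, ENNReal.ofReal (q x) ≤ ∫⁻ _ in Aᶜ, S :=
          lintegral_mono_ae (ae_restrict_of_ae hle)
        have h2 : (∫⁻ _ in Aᶜ, S) = S * volume Aᶜ := by
          simp [lintegral_const]
        have hsub : Aᶜ ⊆ Set.Icc (-1) 1 := by
          intro x hx
          simp only [hA, Set.mem_compl_iff, Set.mem_setOf_eq, not_le] at hx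
          constructor <;> nlinarith [sq_nonneg (x+1), sq_nonneg (x-1)]
        have hvol : volume Aᶜ ≤ 2 := by
          calc volume Aᶜ ≤ volume (Set.Icc (-1:ℝ) 1) := measure_mono hsub
            _ = 2 := by rw [Real.volume_Icc]; norm_num
        refine ne_top_of_le_ne_top ?_ (h1.trans (h2.le.trans (mul_le_mul_right hvol S)))
        exact ENNReal.mul_ne_top hStop (by norm_num)
      have hAtop : ∫⁻ x in A, ENNReal.ofReal (q x) = ⊤ := by
        by_contra h
        have hsplit := lintegral_add_compl (fun x => ENNReal.ofReal (q x)) hAmeas (μ := volume)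
        rw [← hm] at hsplit
        have : m ≠ ⊤ := by rw [← hsplit]; exact ENNReal.add_ne_top.mpr ⟨h, hcompl⟩
        exact this hmtop
      have : (⊤ : ℝ≥0∞) ≤ I := by
        rw [← hAtop]
        calc ∫⁻ x in A, ENNReal.ofReal (q x)
            ≤ ∫⁻ x in A, ENNReal.ofReal (x ^ 2 * q x) := by
              apply setLIntegral_mono (by measurability)
              intro x hx
              have hx2 : 1 ≤ x ^ 2 := hx
              exact ENNReal.ofReal_le_ofReal
                (by nlinarith [mul_le_mul_of_nonneg_right hx2 (hq0 x)])
          _ ≤ I := by rw [hI]; exact setLIntegral_le_lintegral _ _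
      exact top_le_iff.mp this
    rw [hItop, ENNReal.mul_top (pow_ne_zero 2 hS0)]
    exact le_top
  -- main case: 0 < S < ∞ and m < ∞
  rw [hSM]
  set mr := m.toReal with hmr
  have hmm : m = ENNReal.ofReal mr := (ENNReal.ofReal_toReal hmtop).symm
  have hmr0 : 0 ≤ mr := ENNReal.toReal_nonneg
  rcases eq_or_lt_of_le hmr0 with hmr0' | hmrpos
  · have : m = 0 := by rw [hmm, ← hmr0']; simp
    simp [this]
  set r : ℝ := mr / (2 * M) with hr
  have hrpos : 0 < r := by positivity
  -- pointwise bathtub inequality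
  have key : ∀ᵐ x : ℝ, ENNReal.ofReal (r ^ 2 * q x)
      ≤ ENNReal.ofReal (x ^ 2 * q x) + ENNReal.ofReal (max (r^2 - x^2) 0 * M) := by
    filter_upwards [hqM] with x hxM
    rw [← ENNReal.ofReal_add (mul_nonneg (sq_nonneg x) (hq0 x))
      (mul_nonneg (le_max_right _ _) hMpos.le)]
    apply ENNReal.ofReal_le_ofReal
    rcases le_or_gt (r^2) (x^2) with h | h
    · have : max (r^2 - x^2) 0 = 0 := max_eq_right (by linarith)
      rw [this]
      nlinarith [mul_le_mul_of_nonneg_right h (hq0 x)]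
    · have : max (r^2 - x^2) 0 = r^2 - x^2 := max_eq_left (by linarith)
      rw [this]
      nlinarith [mul_le_mul_of_nonneg_left hxM (by linarith : (0:ℝ) ≤ r^2 - x^2)]
  -- integrate the pointwise inequality
  have hkey2 : ENNReal.ofReal (r^2) * m ≤ I + ENNReal.ofReal (4/3 * r^3) * ENNReal.ofReal M := by
    have h1 : ∫⁻ x, ENNReal.ofReal (r ^ 2 * q x) = ENNReal.ofReal (r^2) * m := by
      rw [hm, ← lintegral_const_mul _ hmeasq]
      congr 1; ext x; rw [ENNReal.ofReal_mul (by positivity)]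
    have h2 : ∫⁻ x, (ENNReal.ofReal (x ^ 2 * q x) + ENNReal.ofReal (max (r^2 - x^2) 0 * M))
        = I + ENNReal.ofReal (4/3 * r^3) * ENNReal.ofReal M := by
      rw [lintegral_add_left hmeasI, ← hI]
      congr 1
      have : ∀ x : ℝ, ENNReal.ofReal (max (r^2 - x^2) 0 * M)
          = ENNReal.ofReal (max (r^2 - x^2) 0) * ENNReal.ofReal M := fun x =>
        ENNReal.ofReal_mul (le_max_right _ _)
      rw [lintegral_congr this, lintegral_mul_const (f := fun x : ℝ => ENNReal.ofReal (max (r^2 - x^2) 0)) _ (((continuous_const.sub (continuous_pow 2)).max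
        continuous_const).measurable).ennreal_ofReal, aux_bathtub_integral r hrpos]
    rw [← h1, ← h2]
    exact lintegral_mono_ae key
  -- substitute the explicit value of r
  have e1 : r^2 * mr = mr^3 / (4 * M^2) := by rw [hr]; field_simp; ring
  have e2 : 4/3 * r^3 * M = mr^3 / (6 * M^2) := by rw [hr]; field_simp; ring
  have hkey3 : ENNReal.ofReal (mr^3 / (4 * M^2)) ≤ I + ENNReal.ofReal (mr^3 / (6 * M^2)) := by
    calc ENNReal.ofReal (mr^3 / (4 * M^2)) = ENNReal.ofReal (r^2 * mr) := by rw [e1]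
      _ = ENNReal.ofReal (r^2) * m := by rw [hmm, ENNReal.ofReal_mul (by positivity)]
      _ ≤ I + ENNReal.ofReal (4/3 * r^3) * ENNReal.ofReal M := hkey2
      _ = I + ENNReal.ofReal (mr^3 / (6 * M^2)) := by
          rw [← ENNReal.ofReal_mul (by positivity), e2]
  have hIlb : ENNReal.ofReal (mr^3 / (12 * M^2)) ≤ I := by
    rw [← ENNReal.add_le_add_iff_right (ENNReal.ofReal_ne_top :
      ENNReal.ofReal (mr^3 / (6 * M^2)) ≠ ⊤)]
    calc ENNReal.ofReal (mr^3 / (12 * M^2)) + ENNReal.ofReal (mr^3 / (6 * M^2))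
        = ENNReal.ofReal (mr^3 / (4 * M^2)) := by
          rw [← ENNReal.ofReal_add (by positivity) (by positivity)]
          congr 1; field_simp; ring
      _ ≤ I + ENNReal.ofReal (mr^3 / (6 * M^2)) := hkey3
  calc m ^ 3 / 12 = ENNReal.ofReal (mr^3 / 12) := by
        rw [hmm, ← ENNReal.ofReal_pow hmr0, ENNReal.ofReal_div_of_pos (by norm_num)]
        norm_num
    _ = ENNReal.ofReal (M^2) * ENNReal.ofReal (mr^3 / (12 * M^2)) := by
        rw [← ENNReal.ofReal_mul (by positivity)]
        congr 1; field_simp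
    _ ≤ ENNReal.ofReal (M^2) * I := mul_le_mul_right hIlb _
    _ = (ENNReal.ofReal M) ^ 2 * I := by rw [← ENNReal.ofReal_pow hMpos.le]
end

section
/- There exists an absolute constant c > 0 such that for any real random variable X with standard deviation σ > 0 and finite maximum of density M, its characteristic function satisfies |f(t)| ≤ 1 − (c/(M²σ²)) · min{σ²t², 1} for all real t. -/
open MeasureTheory Real Set

lemma cos_le_one_sub_sq_div_four {x : ℝ} (h0 : 0 ≤ x) (h1 : x ≤ 1) :
    Real.cos x ≤ 1 - x^2/4 := by
  rcases eq_or_lt_of_le h0 with rfl|hx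
  · simp
  have hs : x/2 - (x/2)^3/4 < Real.sin (x/2) :=
    by have := Real.sin_gt_sub_cube (x := x/2) (by linarith); nlinarith [pow_pos (show 0 < x/2 by linarith) 3]
  have hq : (x/2)^2 ≤ 1/4 := by nlinarith
  have h3 : (x/2)^3 ≤ (1/4)*(x/2) := by nlinarith
  have hpos : 0 < x/2 - (x/2)^3/4 := by nlinarith
  have hc : Real.cos x = 1 - 2 * Real.sin (x/2)^2 := by
    have h2 := Real.cos_two_mul (x/2)
    have h4 := Real.sin_sq_add_cos_sq (x/2)
    rw [show 2*(x/2) = x by ring] at h2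
    linarith
  have hs2 : (x/2 - (x/2)^3/4)^2 < Real.sin (x/2)^2 := by nlinarith
  have hL : x^2/8 ≤ (x/2 - (x/2)^3/4)^2 := by
    nlinarith [sq_nonneg x, sq_nonneg (x*x), sq_nonneg (x^2), sq_nonneg (1 - x^2/16)]
  linarith

lemma cos_le_of_dist_lattice {θ δ : ℝ} (hδ0 : 0 ≤ δ)
    (h : ∀ k : ℤ, δ ≤ |θ - 2*π*k|) : Real.cos θ ≤ Real.cos δ := by
  set k := round (θ / (2*π)) with hk
  have h2π : (0:ℝ) < 2*π := by positivity
  have hr : |θ - 2*π*k| ≤ π := by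
    have h1 := abs_sub_round (θ / (2*π))
    have h2 : θ - 2*π*k = (θ/(2*π) - k)*(2*π) := by field_simp
    rw [h2, abs_mul, abs_of_pos h2π]
    nlinarith [abs_nonneg (θ/(2*π) - (k:ℝ))]
  have hcos : Real.cos θ = Real.cos (|θ - 2*π*k|) := by
    rw [Real.cos_abs, show θ - 2*π*(k:ℝ) = θ - (k:ℝ)*(2*π) by ring,
      Real.cos_sub_int_mul_two_pi]
  rw [hcos]
  exact Real.cos_le_cos_of_nonneg_of_le_pi hδ0 hr (h k)

lemma density_interval_bound {p : ℝ → ℝ} (hint : Integrable p)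
    {M a b : ℝ} (hM : ∀ᵐ x ∂volume, p x ≤ M) (hab : a ≤ b) :
    ∫ x in Set.Icc a b, p x ≤ M * (b - a) := by
  have h1 : ∫ x in Set.Icc a b, p x ≤ ∫ _x in Set.Icc a b, M := by
    apply setIntegral_mono_ae hint.integrableOn (integrableOn_const (by simp [Real.volume_Icc])) hM
  have h2 : ∫ _x in Set.Icc a b, (M:ℝ) = M * (b - a) := by
    rw [setIntegral_const, Real.volume_real_Icc_of_le hab, smul_eq_mul]
    ring
  linarith

lemma chebyshev_compl {p : ℝ → ℝ} (h0 : ∀ x, 0 ≤ p x)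
    (hint : Integrable p) {μ a : ℝ} (ha : 0 < a)
    (hI2 : Integrable (fun x => (x - μ) ^ 2 * p x)) :
    ∫ x in (Set.Icc (μ - a) (μ + a))ᶜ, p x ≤ (∫ x, (x - μ)^2 * p x) / a^2 := by
  have hmeas : MeasurableSet (Set.Icc (μ - a) (μ + a))ᶜ := measurableSet_Icc.compl
  rw [← integral_indicator hmeas]
  have hle : ∀ x, ((Set.Icc (μ - a) (μ + a))ᶜ).indicator p x ≤ (x - μ)^2 * p x / a^2 := by
    intro x
    by_cases hx : x ∈ (Set.Icc (μ - a) (μ + a))ᶜ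
    · rw [Set.indicator_of_mem hx]
      simp only [Set.mem_compl_iff, Set.mem_Icc, not_and_or, not_le] at hx
      have h2 : a^2 ≤ (x - μ)^2 := by
        rcases hx with h|h
        · nlinarith
        · nlinarith
      rw [le_div_iff₀ (by positivity)]
      nlinarith [h0 x]
    · rw [Set.indicator_of_notMem hx]
      have := h0 x; positivity
  calc ∫ x, ((Set.Icc (μ - a) (μ + a))ᶜ).indicator p x
      ≤ ∫ x, (x - μ)^2 * p x / a^2 := by
        apply integral_mono (hint.indicator hmeas) (hI2.div_const _) hle
    _ = (∫ x, (x - μ)^2 * p x) / a^2 := by rw [integral_div]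

lemma card_Icc_real {A B : ℝ} (h : A ≤ B) :
    ((Finset.Icc ⌈A⌉ ⌊B⌋).card : ℝ) ≤ B - A + 1 := by
  rw [Int.card_Icc]
  rcases le_or_gt ⌈A⌉ (⌊B⌋ + 1) with h1|h1
  · have h5 : ((⌊B⌋ + 1 - ⌈A⌉).toNat : ℤ) = ⌊B⌋ + 1 - ⌈A⌉ := Int.toNat_of_nonneg (by omega)
    have h2 : (((⌊B⌋ + 1 - ⌈A⌉).toNat : ℤ) : ℝ) = ((⌊B⌋:ℝ) + 1 - ⌈A⌉) := by
      rw [h5]; push_cast; ring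
    have h3 : ((⌊B⌋:ℝ)) ≤ B := Int.floor_le B
    have h4 : A ≤ (⌈A⌉:ℝ) := Int.le_ceil A
    push_cast at h2 ⊢
    rw [h2]; linarith
  · have : (⌊B⌋ + 1 - ⌈A⌉).toNat = 0 := by omega
    rw [this]
    push_cast
    linarith

set_option maxHeartbeats 1000000 in
lemma core_bound {p : ℝ → ℝ} (hm : Measurable p) (h0 : ∀ x, 0 ≤ p x)
    (h1 : (∫ x, p x) = 1) (hint : Integrable p)
    {μ σ M : ℝ} (hσ : 0 < σ) (hM : 0 < M)
    (hvar : σ ^ 2 = ∫ x, (x - μ) ^ 2 * p x)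
    (hI2 : Integrable (fun x => (x - μ) ^ 2 * p x))
    (hMae : ∀ᵐ x ∂volume, p x ≤ M) (hMσ : 1 / 27 ≤ M ^ 2 * σ ^ 2)
    {t : ℝ} (ht : t ≠ 0) (β : ℝ) :
    ∫ x, Real.cos (t * x + β) * p x ≤
      1 - 1 / 3200 / (M ^ 2 * σ ^ 2) * min (σ ^ 2 * t ^ 2) 1 := by
  have hs : 0 < |t| := abs_pos.2 ht
  set s := |t| with hs_def
  set δ := min (1/σ) s / (20 * M) with hδ_def
  have hMσ' : 1/6 ≤ M * σ := by nlinarith [mul_pos hM hσ]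
  have hminpos : 0 < min (1/σ) s := lt_min (by positivity) hs
  have hδpos : 0 < δ := div_pos hminpos (by positivity)
  have h20Ms : 20*M*δ ≤ s := by
    rw [hδ_def]
    rw [mul_div_assoc']
    rw [div_le_iff₀ (by positivity)]
    calc 20*M*min (1/σ) s ≤ 20*M*s := by
          apply mul_le_mul_of_nonneg_left (min_le_right _ _) (by positivity)
      _ = s * (20*M) := by ring
  have h20Mσ : 20*M*δ*σ ≤ 1 := by
    have h1' : 20*M*δ ≤ 1/σ := by
      rw [hδ_def, mul_div_assoc', div_le_iff₀ (by positivity)]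
      calc 20*M*min (1/σ) s ≤ 20*M*(1/σ) := by
            apply mul_le_mul_of_nonneg_left (min_le_left _ _) (by positivity)
        _ = 1/σ * (20*M) := by ring
    calc 20*M*δ*σ ≤ (1/σ)*σ := by
          apply mul_le_mul_of_nonneg_right h1' hσ.le
      _ = 1 := by field_simp
  have hδ1 : δ ≤ 3/10 := by nlinarith
  -- sets
  set W : Set ℝ := Set.Icc (μ - 2*σ) (μ + 2*σ) with hW_def
  set N : Set ℝ := {x | x ∈ W ∧ Real.cos δ < Real.cos (t*x + β)} with hN_def
  have hcont : Continuous (fun x : ℝ => Real.cos (t*x + β)) :=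
    Real.continuous_cos.comp (by continuity)
  have hNm : MeasurableSet N := by
    have : N = W ∩ {x | Real.cos δ < Real.cos (t*x + β)} := by
      ext x; simp [hN_def, Set.mem_inter_iff]
    rw [this]
    exact measurableSet_Icc.inter (measurableSet_lt measurable_const hcont.measurable)
  -- covering family
  set A : ℝ := ((t*μ + β) - (2*σ*s + δ))/(2*π) with hA_def
  set B : ℝ := ((t*μ + β) + (2*σ*s + δ))/(2*π) with hB_def
  set F : Finset ℤ := Finset.Icc ⌈A⌉ ⌊B⌋ with hF_def
  have h2π : (0:ℝ) < 2*π := by positivity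
  set xk : ℤ → ℝ := fun k => (2*π*k - β)/t with hxk_def
  have hcover : ∀ x ∈ N, ∃ k ∈ F, x ∈ Set.Icc (xk k - δ/s) (xk k + δ/s) := by
    intro x hx
    obtain ⟨hxW, hxcos⟩ := hx
    have hnot : ¬ (∀ k : ℤ, δ ≤ |(t*x + β) - 2*π*k|) := by
      intro hall
      exact absurd (cos_le_of_dist_lattice hδpos.le hall) (not_le.2 hxcos)
    push_neg at hnot
    obtain ⟨k, hk⟩ := hnot
    refine ⟨k, ?_, ?_⟩
    · -- k ∈ F
      have hxμ : |x - μ| ≤ 2*σ := by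
        rw [abs_le]
        obtain ⟨hl, hr⟩ := hxW
        constructor <;> linarith
    -- |2πk - (tμ+β)| ≤ δ + 2σs
      have hbd : |2*π*k - (t*μ + β)| ≤ δ + 2*σ*s := by
        have e1 : 2*π*(k:ℝ) - (t*μ + β) = -((t*x + β) - 2*π*k) + t*(x - μ) := by ring
        calc |2*π*(k:ℝ) - (t*μ + β)| = |(-((t*x + β) - 2*π*k)) + t*(x - μ)| := by rw [e1]
          _ ≤ |(-((t*x + β) - 2*π*k))| + |t*(x - μ)| := abs_add_le _ _
          _ ≤ δ + 2*σ*s := by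
              rw [abs_neg, abs_mul]
              have h2 : |t| * |x - μ| ≤ |t| * (2*σ) :=
                mul_le_mul_of_nonneg_left hxμ (abs_nonneg t)
              have h3 := hk.le
              have h4 : s = |t| := hs_def
              nlinarith
      rw [hF_def, Finset.mem_Icc]
      rw [abs_le] at hbd
      constructor
      · rw [Int.ceil_le, hA_def, div_le_iff₀ h2π]
        push_cast
        nlinarith [hbd.1]
      · rw [Int.le_floor, hB_def, le_div_iff₀ h2π]
        push_cast
        nlinarith [hbd.2]
    · -- x ∈ Icc ..
      have he : x - xk k = ((t*x + β) - 2*π*k)/t := by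
        rw [hxk_def]; field_simp; ring
      have habs : |x - xk k| ≤ δ/s := by
        rw [he, abs_div]
        exact (div_le_div_iff_of_pos_right hs).2 hk.le
      rw [Set.mem_Icc]
      rw [abs_le] at habs
      constructor <;> linarith [habs.1, habs.2]
  -- cardinality bound
  have hAB : A ≤ B := by
    rw [hA_def, hB_def]
    apply (div_le_div_iff_of_pos_right h2π).2
    have h5 : 0 < 2*σ*s + δ := by positivity
    linarith
  have hBA : B - A = (4*σ*s + 2*δ)/(2*π) := by
    rw [hA_def, hB_def, div_sub_div_same]
    congr 1
    ring
  have hcard : ((F.card : ℝ)) ≤ (4*σ*s + 2*δ)/(2*π) + 1 := by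
    have := card_Icc_real hAB
    rw [hF_def]
    linarith
  -- integral over N
  have hIk : ∀ k : ℤ, IntegrableOn p (Set.Icc (xk k - δ/s) (xk k + δ/s)) := fun k =>
    hint.integrableOn
  have hNint : ∫ x in N, p x ≤ (F.card : ℝ) * (M * (2*(δ/s))) := by
    rw [← integral_indicator hNm]
    have hptws : ∀ x, N.indicator p x ≤
        ∑ k ∈ F, (Set.Icc (xk k - δ/s) (xk k + δ/s)).indicator p x := by
      intro x
      by_cases hx : x ∈ N
      · obtain ⟨k, hkF, hkx⟩ := hcover x hx
        rw [Set.indicator_of_mem hx]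
        have he : p x = (Set.Icc (xk k - δ/s) (xk k + δ/s)).indicator p x :=
          (Set.indicator_of_mem hkx p).symm
        rw [he]
        exact Finset.single_le_sum
          (f := fun k => (Set.Icc (xk k - δ/s) (xk k + δ/s)).indicator p x)
          (fun i _ => Set.indicator_nonneg (fun y _ => h0 y) x) hkF
      · rw [Set.indicator_of_notMem hx]
        exact Finset.sum_nonneg fun i _ => Set.indicator_nonneg (fun y _ => h0 y) x
    calc ∫ x, N.indicator p x
        ≤ ∫ x, ∑ k ∈ F, (Set.Icc (xk k - δ/s) (xk k + δ/s)).indicator p x := by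
          exact integral_mono (hint.indicator hNm)
            (integrable_finset_sum F fun k _ => hint.indicator measurableSet_Icc) hptws
      _ = ∑ k ∈ F, ∫ x, (Set.Icc (xk k - δ/s) (xk k + δ/s)).indicator p x :=
          integral_finset_sum F fun k _ => hint.indicator measurableSet_Icc
      _ ≤ ∑ _k ∈ F, M * (2*(δ/s)) := by
          apply Finset.sum_le_sum
          intro k _
          rw [integral_indicator measurableSet_Icc]
          have hds : 0 < δ/s := div_pos hδpos hs
          have hb := density_interval_bound hint hMae
            (show xk k - δ/s ≤ xk k + δ/s by linarith)
          calc ∫ x in Set.Icc (xk k - δ/s) (xk k + δ/s), p x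
              ≤ M * ((xk k + δ/s) - (xk k - δ/s)) := hb
            _ = M * (2*(δ/s)) := by ring
      _ = (F.card : ℝ) * (M * (2*(δ/s))) := by rw [Finset.sum_const, nsmul_eq_mul]
  have hπ3 : (3:ℝ) < π := pi_gt_three
  have hC0 : (0:ℝ) ≤ (F.card : ℝ) := Nat.cast_nonneg _
  have hN14 : ∫ x in N, p x ≤ 1/4 := by
    have hcard' : ((F.card : ℝ) - 1) * (2*π) ≤ 4*σ*s + 2*δ := by
      have h6 : ((F.card : ℝ) - 1) ≤ (4*σ*s + 2*δ)/(2*π) := by linarith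
      calc ((F.card : ℝ) - 1) * (2*π) ≤ (4*σ*s + 2*δ)/(2*π) * (2*π) :=
            mul_le_mul_of_nonneg_right h6 h2π.le
        _ = 4*σ*s + 2*δ := by field_simp
    have hMδ0 : (0:ℝ) ≤ M*δ := by positivity
    have hMσδ : M*σ*δ ≤ 1/20 := by nlinarith
    have hMδs : M*δ ≤ s/20 := by nlinarith
    have h7 : ((F.card : ℝ) - 1) * (2*π) * (M*δ) ≤ 23*s/100 := by
      calc ((F.card : ℝ) - 1) * (2*π) * (M*δ) ≤ (4*σ*s + 2*δ) * (M*δ) :=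
            mul_le_mul_of_nonneg_right hcard' hMδ0
        _ = 4*s*(M*σ*δ) + 2*δ*(M*δ) := by ring
        _ ≤ 4*s*(1/20) + 2*(3/10)*(s/20) := by
            have e1 : 4*s*(M*σ*δ) ≤ 4*s*(1/20) :=
              mul_le_mul_of_nonneg_left hMσδ (by positivity)
            have e2 : 2*δ*(M*δ) ≤ 2*(3/10)*(s/20) := by nlinarith
            linarith
        _ = 23*s/100 := by ring
    have key : (F.card : ℝ) * (M * (2*(δ/s))) ≤ 1/4 := by
      rw [show (F.card : ℝ) * (M * (2*(δ/s))) = ((F.card : ℝ)) * M * 2 * δ/s by ring,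
        div_le_iff₀ hs]
      rcases le_or_gt (((F.card : ℝ) - 1) * (M*δ)) 0 with hneg|hpos
      · nlinarith
      · have h8 : (((F.card : ℝ) - 1) * (M*δ)) * (2*3) ≤ (((F.card : ℝ) - 1) * (M*δ)) * (2*π) := by
          apply mul_le_mul_of_nonneg_left (by linarith) hpos.le
        nlinarith
    linarith
  -- Chebyshev
  have hWc : ∫ x in Wᶜ, p x ≤ 1/4 := by
    have hch := chebyshev_compl h0 hint (show (0:ℝ) < 2*σ by positivity) hI2
    rw [← hvar] at hch
    have he : σ^2/(2*σ)^2 = 1/4 := by field_simp; ring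
    rw [hW_def]
    linarith
  have hWint : ∫ x in W, p x = 1 - ∫ x in Wᶜ, p x := by
    have h9 := integral_add_compl (measurableSet_Icc : MeasurableSet W) hint
    rw [h1] at h9
    linarith
  have hNW : N ⊆ W := fun x hx => hx.1
  have hE : 1/2 ≤ ∫ x in W \ N, p x := by
    have hdiff : ∫ x in W \ N, p x = (∫ x in W, p x) - ∫ x in N, p x :=
      integral_diff hNm hint.integrableOn hNW
    linarith
  -- integrability of cos * p
  have hIcos : Integrable (fun x => Real.cos (t*x + β) * p x) := by
    apply Integrable.mono' hint (hcont.measurable.mul hm).aestronglyMeasurable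
    filter_upwards with x
    have h10 : ‖Real.cos (t*x + β) * p x‖ = |Real.cos (t*x + β)| * p x := by
      rw [Real.norm_eq_abs, abs_mul, abs_of_nonneg (h0 x)]
    show ‖Real.cos (t*x + β) * p x‖ ≤ p x
    rw [h10]
    nlinarith [Real.abs_cos_le_one (t*x + β), h0 x, abs_nonneg (Real.cos (t*x+β))]
  have hIone : Integrable (fun x => (1 - Real.cos (t*x + β)) * p x) := by
    have he : (fun x => (1 - Real.cos (t*x + β)) * p x)
        = fun x => p x - Real.cos (t*x + β) * p x := by
      funext x; ring
    rw [he]; exact hint.sub hIcos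
  have hsplit : ∫ x, (1 - Real.cos (t*x + β)) * p x = 1 - ∫ x, Real.cos (t*x + β) * p x := by
    have he : ∫ x, (1 - Real.cos (t*x + β)) * p x
        = ∫ x, (p x - Real.cos (t*x + β) * p x) := by
      congr 1; funext x; ring
    rw [he, integral_sub hint hIcos, h1]
  have hEm : MeasurableSet (W \ N) := measurableSet_Icc.diff hNm
  have hEbound : δ^2/4 * (1/2) ≤ ∫ x, (1 - Real.cos (t*x + β)) * p x := by
    have step1 : ∫ x in W \ N, δ^2/4 * p x ≤ ∫ x in W \ N, (1 - Real.cos (t*x + β)) * p x := by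
      apply setIntegral_mono_on ((hint.integrableOn).const_mul _) hIone.integrableOn hEm
      intro x hx
      obtain ⟨hxW, hxN⟩ := hx
      have hcosle : Real.cos (t*x + β) ≤ Real.cos δ := by
        by_contra hcc
        push_neg at hcc
        exact hxN ⟨hxW, hcc⟩
      have h11 := cos_le_one_sub_sq_div_four hδpos.le (by linarith : δ ≤ 1)
      have h12 : δ^2/4 ≤ 1 - Real.cos (t*x + β) := by linarith
      exact mul_le_mul_of_nonneg_right h12 (h0 x)
    have step0 : ∫ x in W \ N, δ^2/4 * p x = δ^2/4 * ∫ x in W \ N, p x :=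
      integral_const_mul _ _
    have step2 : ∫ x in W \ N, (1 - Real.cos (t*x + β)) * p x
        ≤ ∫ x, (1 - Real.cos (t*x + β)) * p x := by
      apply setIntegral_le_integral hIone
      filter_upwards with x
      have h13 : Real.cos (t*x + β) ≤ 1 := Real.cos_le_one _
      simp only [Pi.zero_apply]
      nlinarith [h0 x]
    have step3 : δ^2/4 * (1/2) ≤ δ^2/4 * ∫ x in W \ N, p x :=
      mul_le_mul_of_nonneg_left hE (by positivity)
    linarith
  -- arithmetic with min
  have hmin : (min (1/σ) s)^2 = min (σ^2*t^2) 1 / σ^2 := by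
    have hst : s^2 = t^2 := sq_abs t
    rcases le_total (1/σ) s with h|h
    · rw [min_eq_left h]
      have h9 : 1 ≤ s*σ := by
        rw [div_le_iff₀ hσ] at h
        linarith
      have h10 : 1 ≤ σ^2*t^2 := by nlinarith [hst, h9, mul_nonneg hs.le hσ.le]
      rw [min_eq_right h10, div_pow, one_pow]
    · rw [min_eq_right h]
      have h9 : s*σ ≤ 1 := by
        rw [le_div_iff₀ hσ] at h
        linarith
      have h10 : σ^2*t^2 ≤ 1 := by nlinarith [hst, h9, mul_nonneg hs.le hσ.le]
      rw [min_eq_left h10, ← hst]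
      field_simp
  have hfinal : 1/3200/(M^2*σ^2) * min (σ^2*t^2) 1 = δ^2/8 := by
    have e1 : δ^2 = (min (1/σ) s)^2 / (20*M)^2 := by
      rw [hδ_def, div_pow]
    rw [e1, hmin]
    have hσ2 : σ^2 ≠ 0 := by positivity
    have hM2 : (20*M)^2 ≠ 0 := by positivity
    field_simp
    ring
  have := hEbound
  rw [hsplit] at this
  have e2 : δ^2/4*(1/2) = δ^2/8 := by ring
  linarith [hfinal]

set_option maxHeartbeats 1000000 in
/-- Statuljavičus separation theorem: there is an absolute constant `c > 0` such that
for any real random variable with density `p`, standard deviation `σ > 0` and finite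
maximum of density `M`, the characteristic function satisfies
`|f(t)| ≤ 1 − (c/(M²σ²)) · min{σ²t², 1}` for all real `t`. -/
theorem statulevicius_separation :
    ∃ c : ℝ, 0 < c ∧
      ∀ (p : ℝ → ℝ), Measurable p → (∀ x, 0 ≤ p x) → (∫ x, p x) = 1 →
      ∀ (μ σ M : ℝ), 0 < σ →
      μ = (∫ x, x * p x) →
      σ ^ 2 = (∫ x, (x - μ) ^ 2 * p x) →
      Integrable (fun x => x * p x) →
      Integrable (fun x => (x - μ) ^ 2 * p x) →
      essSup p volume = M → (∀ᵐ x ∂volume, p x ≤ M) →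
      ∀ t : ℝ,
        ‖∫ x, Complex.exp ((t * x : ℝ) * Complex.I) * (p x : ℂ)‖
          ≤ 1 - c / (M ^ 2 * σ ^ 2) * min (σ ^ 2 * t ^ 2) 1 := by
  refine ⟨1/3200, by norm_num, ?_⟩
  intro p hm h0 h1 μ σ M hσ hμ hvar hI1 hI2 hess hMae t
  have hint : Integrable p := by
    by_contra hc
    rw [integral_undef hc] at h1
    norm_num at h1
  have hM : 0 < M := by
    by_contra hc
    push_neg at hc
    have hae : ∀ᵐ x ∂(volume : Measure ℝ), p x ≤ 0 := hMae.mono fun x hx => hx.trans hc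
    have h2 := integral_nonpos_of_ae hae
    rw [h1] at h2
    norm_num at h2
  have hMσ : 1/27 ≤ M^2 * σ^2 := by
    set a := 1/(3*M) with ha_def
    have ha : (0:ℝ) < a := by rw [ha_def]; positivity
    have hIcc := density_interval_bound hint hMae (show μ - a ≤ μ + a by linarith)
    have hch := chebyshev_compl h0 hint ha hI2
    rw [← hvar] at hch
    have hsum := integral_add_compl
      (measurableSet_Icc : MeasurableSet (Set.Icc (μ - a) (μ + a))) hint
    rw [h1] at hsum
    have e1 : M * ((μ + a) - (μ - a)) = 2/3 := by
      rw [ha_def]; field_simp; ring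
    have e2 : σ^2 / a^2 = 9*(M^2*σ^2) := by
      rw [ha_def]; field_simp; ring
    rw [e1] at hIcc
    rw [e2] at hch
    linarith
  rcases eq_or_ne t 0 with rfl|ht
  · have e : (∫ x : ℝ, Complex.exp (((0:ℝ)*x : ℝ) * Complex.I) * (p x : ℂ))
        = ∫ x : ℝ, (p x : ℂ) := by
      congr 1; funext x; norm_num
    rw [e]
    have hb : ‖∫ x : ℝ, (p x : ℂ)‖ ≤ 1 := by
      calc ‖∫ x : ℝ, (p x : ℂ)‖ = ‖∫ x : ℝ, (p x : ℂ)‖ := rfl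
        _ ≤ ∫ x : ℝ, ‖(p x : ℂ)‖ := norm_integral_le_integral_norm _
        _ = ∫ x : ℝ, p x := by
            congr 1; funext x
            rw [Complex.norm_of_nonneg (h0 x)]
        _ = 1 := h1
    have hrhs : 1 - 1/3200/(M^2*σ^2) * min (σ^2*(0:ℝ)^2) 1 = 1 := by norm_num
    rw [hrhs]
    exact hb
  · have hmeasz : AEStronglyMeasurable
        (fun x : ℝ => Complex.exp ((t*x:ℝ)*Complex.I) * (p x:ℂ)) volume := by
      apply Measurable.aestronglyMeasurable
      apply Measurable.mul
      · exact Complex.measurable_exp.comp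
          ((Complex.measurable_ofReal.comp (measurable_id.const_mul t)).mul_const Complex.I)
      · exact Complex.measurable_ofReal.comp hm
    have hnorm : ∀ x : ℝ, ‖Complex.exp ((t*x:ℝ)*Complex.I) * (p x:ℂ)‖ = p x := by
      intro x
      rw [norm_mul, Complex.norm_exp_ofReal_mul_I, Complex.norm_of_nonneg (h0 x), one_mul]
    have hzint : Integrable (fun x : ℝ => Complex.exp ((t*x:ℝ)*Complex.I) * (p x:ℂ)) := by
      apply Integrable.mono' hint hmeasz
      filter_upwards with x
      rw [hnorm x]
    set z := ∫ x : ℝ, Complex.exp ((t*x:ℝ)*Complex.I) * (p x : ℂ) with hz_def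
    rcases eq_or_ne z 0 with hz0|hz0
    · rw [hz0]
      simp only [norm_zero]
      have hmin1 : min (σ^2*t^2) 1 ≤ 1 := min_le_right _ _
      have hmin0 : (0:ℝ) ≤ min (σ^2*t^2) 1 := le_min (by positivity) (by norm_num)
      have hfrac : 1/3200/(M^2*σ^2) ≤ 27/3200 := by
        rw [div_le_iff₀ (by positivity)]
        nlinarith
      have h5 : 1/3200/(M^2*σ^2) * min (σ^2*t^2) 1 ≤ 27/3200 := by
        calc 1/3200/(M^2*σ^2) * min (σ^2*t^2) 1 ≤ 27/3200 * 1 :=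
              mul_le_mul hfrac hmin1 hmin0 (by norm_num)
          _ = 27/3200 := by ring
      linarith
    · set w := (starRingEnd ℂ) z / (‖z‖ : ℂ) with hw_def
      have habsz : ‖z‖ ≠ 0 := norm_ne_zero_iff.mpr hz0
      have habszC : ((‖z‖ : ℝ) : ℂ) ≠ 0 := by exact_mod_cast habsz
      have hconj : (starRingEnd ℂ) z * z = (((‖z‖)^2 : ℝ) : ℂ) := by
        rw [mul_comm, Complex.mul_conj, Complex.normSq_eq_norm_sq]
      have hwz : w * z = ((‖z‖ : ℝ) : ℂ) := by
        rw [hw_def, div_mul_eq_mul_div, hconj,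
          show (((‖z‖)^2 : ℝ) : ℂ)
            = ((‖z‖ : ℝ) : ℂ) * ((‖z‖ : ℝ) : ℂ) by push_cast; ring,
          mul_div_assoc, div_self habszC, mul_one]
      have hw0 : w ≠ 0 := by
        intro hw
        rw [hw, zero_mul] at hwz
        exact habszC hwz.symm
      have habsw : ‖w‖ = 1 := by
        rw [hw_def, norm_div, Complex.norm_conj, Complex.norm_of_nonneg (norm_nonneg z),
          div_self habsz]
      have hcosβ : Real.cos (Complex.arg w) = w.re := by
        rw [Complex.cos_arg hw0, habsw, div_one]
      have hsinβ : Real.sin (Complex.arg w) = w.im := by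
        rw [Complex.sin_arg, habsw, div_one]
      set β := Complex.arg w with hβ_def
      have key : (‖z‖ : ℝ) = ∫ x, Real.cos (t*x + β) * p x := by
        have h3 : w * z = ∫ x : ℝ, w * (Complex.exp ((t*x:ℝ)*Complex.I) * (p x:ℂ)) := by
          rw [hz_def, ← integral_const_mul]
        have h4 : (‖z‖ : ℝ)
            = RCLike.re (∫ x : ℝ, w * (Complex.exp ((t*x:ℝ)*Complex.I) * (p x:ℂ))) := by
          rw [← h3, hwz, RCLike.re_to_complex, Complex.ofReal_re]
        rw [h4, ← integral_re (hzint.const_mul w)]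
        congr 1
        funext x
        have hexp_re : (Complex.exp ((t*x:ℝ)*Complex.I)).re = Real.cos (t*x) :=
          Complex.exp_ofReal_mul_I_re (t*x)
        have hexp_im : (Complex.exp ((t*x:ℝ)*Complex.I)).im = Real.sin (t*x) :=
          Complex.exp_ofReal_mul_I_im (t*x)
        have hre : RCLike.re (w * (Complex.exp ((t*x:ℝ)*Complex.I) * (p x:ℂ)))
            = (w * (Complex.exp ((t*x:ℝ)*Complex.I) * (p x:ℂ))).re := rfl
        rw [hre]
        simp only [Complex.mul_re, Complex.mul_im, Complex.ofReal_re, Complex.ofReal_im,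
          hexp_re, hexp_im]
        rw [Real.cos_add, ← hcosβ, ← hsinβ]
        ring
      rw [key]
      exact core_bound hm h0 h1 hint hσ hM hvar hI2 hMae hMσ ht β
end

section
/- Let X be a random vector in ℝ^d with density p and characteristic function g(t) = E[e^{i⟨t,X⟩}]. For r > 0 with b_r = P(|X| < r) ≥ 1/2, let X_r have the truncated density p_r(x) = (1/b_r) p(x) 1_{|x|<r} with characteristic function g_r. Then for all t ∈ ℝ^d, 1 − |g(t)|² ≥ (1/2)(1 − |g_r(t)|²). -/
open MeasureTheory

/-- If `X` has density `p` on `ℝ^d` with characteristic function `g`, and `X_r` has the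
truncated density `p_r = b_r⁻¹ p 1_{|x|<r}` with characteristic function `g_r`, where
`b_r = P(|X| < r) ≥ 1/2`, then `1 − |g(t)|² ≥ (1/2)(1 − |g_r(t)|²)`. -/
theorem truncation_charFun_bound (d : ℕ)
    (p : EuclideanSpace ℝ (Fin d) → ℝ) (hp : Measurable p)
    (hp0 : ∀ x, 0 ≤ p x) (hp1 : ∫ x, p x = 1)
    (r b : ℝ) (hr : 0 < r)
    (hb : b = ∫ x in {x : EuclideanSpace ℝ (Fin d) | ‖x‖ < r}, p x)
    (hb2 : 1 / 2 ≤ b)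
    (g gr : EuclideanSpace ℝ (Fin d) → ℂ)
    (hg : ∀ t, g t = ∫ x, Complex.exp ((inner ℝ t x : ℝ) * Complex.I) * (p x : ℂ))
    (hgr : ∀ t, gr t = (b : ℂ)⁻¹ *
      ∫ x in {x : EuclideanSpace ℝ (Fin d) | ‖x‖ < r},
        Complex.exp ((inner ℝ t x : ℝ) * Complex.I) * (p x : ℂ)) :
    ∀ t, 1 - ‖g t‖ ^ 2 ≥ (1 / 2) * (1 - ‖gr t‖ ^ 2) := by
  intro t
  set S : Set (EuclideanSpace ℝ (Fin d)) := {x : EuclideanSpace ℝ (Fin d) | ‖x‖ < r} with hSdef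
  have hSm : MeasurableSet S := (isOpen_lt continuous_norm continuous_const).measurableSet
  have hpInt : Integrable p := by
    by_contra h
    rw [integral_undef h] at hp1
    norm_num at hp1
  have hb0 : (0:ℝ) < b := by linarith
  have hb1 : b ≤ 1 := by
    rw [hb, ← hp1]
    exact setIntegral_le_integral hpInt (ae_of_all _ hp0)
  set f : EuclideanSpace ℝ (Fin d) → ℂ :=
    fun x => Complex.exp ((inner ℝ t x : ℝ) * Complex.I) * (p x : ℂ) with hfdef
  have hnorm : ∀ x, ‖f x‖ = p x := by
    intro x
    rw [hfdef]
    rw [norm_mul, Complex.norm_exp_ofReal_mul_I, one_mul,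
      Complex.norm_real, Real.norm_eq_abs, abs_of_nonneg (hp0 x)]
  have hcont : Continuous fun x : EuclideanSpace ℝ (Fin d) =>
      Complex.exp ((inner ℝ t x : ℝ) * Complex.I) := by
    apply Complex.continuous_exp.comp
    exact (Complex.continuous_ofReal.comp (continuous_const.inner continuous_id)).mul
      continuous_const
  have hfInt : Integrable f := by
    apply Integrable.bdd_mul (c := 1) (hpInt.ofReal) hcont.aestronglyMeasurable
    exact ae_of_all _ (fun x => le_of_eq
      (by rw [Complex.norm_exp_ofReal_mul_I]))
  have hsplit : (∫ x in S, f x) + (∫ x in Sᶜ, f x) = g t := by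
    rw [hg]
    exact integral_add_compl hSm hfInt
  have hpsplit : (∫ x in S, p x) + (∫ x in Sᶜ, p x) = 1 := by
    rw [← hp1]
    exact integral_add_compl hSm hpInt
  have hbC : (b : ℂ) ≠ 0 := by exact_mod_cast hb0.ne'
  have hI : (∫ x in S, f x) = (b : ℂ) * gr t := by
    rw [hgr, ← mul_assoc, mul_inv_cancel₀ hbC, one_mul]
  have hIb : ‖∫ x in S, f x‖ ≤ b := by
    calc ‖∫ x in S, f x‖ ≤ ∫ x in S, ‖f x‖ := norm_integral_le_integral_norm _
    _ = ∫ x in S, p x := by simp only [hnorm]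
    _ = b := hb.symm
  have hnormI : ‖∫ x in S, f x‖ = b * ‖gr t‖ := by
    rw [hI]
    simp [norm_mul, Complex.norm_real, abs_of_pos hb0]
  have hgr1 : ‖gr t‖ ≤ 1 := by
    rw [hnormI] at hIb
    nlinarith
  have hJ : ‖∫ x in Sᶜ, f x‖ ≤ 1 - b := by
    calc ‖∫ x in Sᶜ, f x‖ ≤ ∫ x in Sᶜ, ‖f x‖ := norm_integral_le_integral_norm _
    _ = ∫ x in Sᶜ, p x := by simp only [hnorm]
    _ = 1 - b := by rw [hb]; linarith [hpsplit]
  have hgbound : ‖g t‖ ≤ b * ‖gr t‖ + (1 - b) := by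
    rw [← hsplit]
    calc ‖(∫ x in S, f x) + (∫ x in Sᶜ, f x)‖
        ≤ ‖∫ x in S, f x‖ + ‖∫ x in Sᶜ, f x‖ := norm_add_le _ _
    _ ≤ b * ‖gr t‖ + (1 - b) := by rw [hnormI]; linarith
  set a := ‖g t‖
  set s := ‖gr t‖
  have ha0 : 0 ≤ a := norm_nonneg _
  have hs0 : 0 ≤ s := norm_nonneg _
  have hsq : a ^ 2 ≤ (b * s + (1 - b)) ^ 2 := by nlinarith
  nlinarith [mul_nonneg (mul_nonneg hb0.le (sub_nonneg.2 hgr1)) (sub_nonneg.2 hb1),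
    mul_nonneg (sub_nonneg.2 hgr1) hs0, mul_nonneg hb0.le hs0,
    mul_nonneg (mul_nonneg hb0.le hb0.le) (sq_nonneg (1 - s))]
end

section
/- If X is a random vector in ℝ^d (d ≥ 2) with density p bounded by M, r > 0, and b_r = P(|X| < r) ≥ 1/2, then for every unit vector θ the random variable ⟨θ, X_r⟩ (where X_r has the truncated density p_r) has a density bounded by 2 ω_{d−1} r^{d−1} M, where ω_{d−1} is the volume of the unit ball in ℝ^{d−1}. -/
open MeasureTheory

lemma slab_vol_le (m : ℕ) [Nonempty (Fin m)] (r : ℝ) (hr : 0 < r) (s : Set ℝ)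
    (hs : MeasurableSet s) (θ : EuclideanSpace ℝ (Fin (m + 1))) (hθ : ‖θ‖ = 1) :
    volume {x : EuclideanSpace ℝ (Fin (m + 1)) | (inner ℝ θ x : ℝ) ∈ s ∧ ‖x‖ < r}
      ≤ volume (Metric.ball (0 : EuclideanSpace ℝ (Fin m)) r) * volume s := by
  classical
  -- orthonormal basis with `b 0 = θ`
  have horth : Orthonormal ℝ (Set.restrict ({0} : Set (Fin (m + 1))) fun _ => θ) := by
    constructor
    · intro i; exact hθ
    · intro i j hij
      exact absurd (Subtype.ext ((Set.mem_singleton_iff.1 i.2).trans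
        (Set.mem_singleton_iff.1 j.2).symm)) hij
  obtain ⟨b, hb⟩ := horth.exists_orthonormalBasis_extension_of_card_eq (by simp)
  have hb0 : b 0 = θ := hb 0 rfl
  -- eval measurability in EuclideanSpace
  have heval : ∀ i : Fin (m + 1), Measurable fun y : EuclideanSpace ℝ (Fin (m + 1)) => y i :=
    fun i => (measurable_pi_apply i).comp (MeasurableEquiv.toLp 2 (Fin (m + 1) → ℝ)).symm.measurable
  set S₁ : Set (EuclideanSpace ℝ (Fin (m + 1))) := {y | y 0 ∈ s ∧ ‖y‖ < r} with hS₁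
  have hS₁meas : MeasurableSet S₁ :=
    ((heval 0) hs).inter (measurable_norm (measurableSet_Iio (a := r)))
  -- step 1 : rotate θ to the first coordinate
  have hset : {x : EuclideanSpace ℝ (Fin (m + 1)) | (inner ℝ θ x : ℝ) ∈ s ∧ ‖x‖ < r}
      = b.repr ⁻¹' S₁ := by
    ext x
    simp only [Set.mem_setOf_eq, Set.mem_preimage, hS₁, b.repr_apply_apply,
      LinearIsometryEquiv.norm_map, hb0]
  rw [hset, b.measurePreserving_repr.measure_preimage hS₁meas.nullMeasurableSet]
  -- step 2 : move to the pi space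
  have h2 := ((EuclideanSpace.volume_preserving_symm_measurableEquiv_toLp
      (Fin (m + 1))).symm (MeasurableEquiv.toLp 2 (Fin (m + 1) → ℝ)).symm).measure_preimage
      hS₁meas.nullMeasurableSet
  set S₂ : Set (Fin (m + 1) → ℝ) := {y | y 0 ∈ s ∧ ∑ i, y i ^ 2 < r ^ 2} with hS₂def
  have hS₂ : (MeasurableEquiv.toLp 2 (Fin (m + 1) → ℝ)).symm.symm ⁻¹' S₁ = S₂ := by
    ext y
    have hnorm : ‖(MeasurableEquiv.toLp 2 (Fin (m + 1) → ℝ)).symm.symm y‖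
        = Real.sqrt (∑ i, y i ^ 2) := by
      rw [EuclideanSpace.norm_eq]
      congr 1
      refine Finset.sum_congr rfl fun i _ => ?_
      simp [Real.norm_eq_abs, sq_abs]
    simp only [Set.mem_preimage, hS₁, Set.mem_setOf_eq, hnorm, hS₂def,
      Real.sqrt_lt' hr]
    rfl
  rw [← h2, hS₂]
  -- step 3 : split off the first coordinate
  set e := MeasurableEquiv.piFinSuccAbove (fun _ : Fin (m + 1) => ℝ) 0 with he
  set B₂ : Set (Fin m → ℝ) := {z | ∑ i, z i ^ 2 < r ^ 2} with hB₂def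
  have hB₂meas : MeasurableSet B₂ :=
    measurableSet_lt (Finset.measurable_sum _ fun i _ => (measurable_pi_apply i).pow_const 2)
      measurable_const
  have hsub : S₂ ⊆ e ⁻¹' (s ×ˢ B₂) := by
    intro y hy
    obtain ⟨hy0, hysum⟩ := hy
    have hey : e y = (y 0, fun j : Fin m => y ((0 : Fin (m + 1)).succAbove j)) := rfl
    refine Set.mem_preimage.2 ?_
    rw [hey]
    refine Set.mem_prod.2 ⟨hy0, ?_⟩
    simp only [hB₂def, Set.mem_setOf_eq]
    calc ∑ j : Fin m, y ((0 : Fin (m + 1)).succAbove j) ^ 2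
        ≤ ∑ i, y i ^ 2 := by
          rw [Fin.sum_univ_succAbove (fun i => y i ^ 2) 0]
          exact le_add_of_nonneg_left (sq_nonneg _)
      _ < r ^ 2 := hysum
  have h3 := (volume_preserving_piFinSuccAbove (fun _ : Fin (m + 1) => ℝ) 0).measure_preimage
      ((hs.prod hB₂meas).nullMeasurableSet)
  calc volume S₂ ≤ volume (e ⁻¹' (s ×ˢ B₂)) := measure_mono hsub
    _ = volume (s ×ˢ B₂) := h3
    _ = volume s * volume B₂ := by
        rw [MeasureTheory.Measure.volume_eq_prod, Measure.prod_prod]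
    _ = volume s * volume (Metric.ball (0 : EuclideanSpace ℝ (Fin m)) r) := by
        congr 1
        have h4 := (EuclideanSpace.volume_preserving_symm_measurableEquiv_toLp
            (Fin m)).measure_preimage hB₂meas.nullMeasurableSet
        rw [← h4]
        congr 1
        ext z
        have hnorm : ‖z‖ = Real.sqrt (∑ i, ((MeasurableEquiv.toLp 2 (Fin m → ℝ)).symm z) i ^ 2) := by
          rw [EuclideanSpace.norm_eq]
          congr 1
          refine Finset.sum_congr rfl fun i _ => ?_
          simp [Real.norm_eq_abs, sq_abs]
        simp only [Set.mem_preimage, hB₂def, Set.mem_setOf_eq, Metric.mem_ball,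
          dist_zero_right, hnorm, Real.sqrt_lt' hr]
    _ = volume (Metric.ball (0 : EuclideanSpace ℝ (Fin m)) r) * volume s := mul_comm _ _

/-- If `X` has density `p ≤ M` on `ℝ^d` (`d ≥ 2`), and `X_r` has the truncated density
`p_r = b⁻¹ p 1_{|x|<r}` with `b = P(|X| < r) ≥ 1/2`, then for every unit vector `θ` the
random variable `⟨θ, X_r⟩` has a density bounded by `2 ω_{d−1} r^{d−1} M`, where
`ω_{d−1} = π^{(d−1)/2}/Γ((d−1)/2 + 1)` is the volume of the unit ball in `ℝ^{d−1}`.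
(Having a density bounded by `C` is expressed as: the distribution of `⟨θ, X_r⟩` is
dominated by `C` times Lebesgue measure.) -/
theorem truncation_marginal_density_bound (d : ℕ) (hd : 2 ≤ d)
    (p : EuclideanSpace ℝ (Fin d) → ℝ) (hp : Measurable p)
    (hp0 : ∀ x, 0 ≤ p x) (hp1 : ∫ x, p x = 1)
    (M : ℝ) (hpM : ∀ x, p x ≤ M)
    (r b : ℝ) (hr : 0 < r)
    (hb : b = ∫ x in {x : EuclideanSpace ℝ (Fin d) | ‖x‖ < r}, p x)
    (hb2 : 1 / 2 ≤ b)
    (pr : EuclideanSpace ℝ (Fin d) → ℝ)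
    (hpr : ∀ x, pr x = b⁻¹ * Set.indicator {x : EuclideanSpace ℝ (Fin d) | ‖x‖ < r} p x)
    (θ : EuclideanSpace ℝ (Fin d)) (hθ : ‖θ‖ = 1)
    (ω : ℝ)
    (hω : ω = Real.pi ^ (((d : ℝ) - 1) / 2) / Real.Gamma (((d : ℝ) - 1) / 2 + 1)) :
    Measure.map (fun x => (inner ℝ θ x : ℝ))
        (volume.withDensity fun x => ENNReal.ofReal (pr x))
      ≤ ENNReal.ofReal (2 * ω * r ^ (d - 1) * M) • volume := by
  obtain ⟨m, rfl⟩ : ∃ m, d = m + 1 := ⟨d - 1, by omega⟩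
  have hm : 1 ≤ m := by omega
  haveI : Nonempty (Fin m) := ⟨⟨0, by omega⟩⟩
  have hM0 : 0 ≤ M := le_trans (hp0 0) (hpM 0)
  have hb0 : (0 : ℝ) < b := lt_of_lt_of_le (by norm_num) hb2
  have hbinv : b⁻¹ ≤ 2 := by
    rw [show (2 : ℝ) = (1 / 2)⁻¹ by norm_num]
    exact inv_anti₀ (by norm_num) hb2
  have hinner : Measurable fun x : EuclideanSpace ℝ (Fin (m + 1)) => (inner ℝ θ x : ℝ) :=
    (continuous_const.inner continuous_id).measurable
  rw [Measure.le_iff]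
  intro s hs
  rw [Measure.map_apply hinner hs, withDensity_apply _ (hinner hs),
    Measure.smul_apply, smul_eq_mul]
  set A := (fun x : EuclideanSpace ℝ (Fin (m + 1)) => (inner ℝ θ x : ℝ)) ⁻¹' s with hA
  set B := Metric.ball (0 : EuclideanSpace ℝ (Fin (m + 1))) r with hB
  -- pointwise bound on the density
  have hpoint : ∀ x, ENNReal.ofReal (pr x)
      ≤ B.indicator (fun _ => ENNReal.ofReal (2 * M)) x := by
    intro x
    by_cases hx : ‖x‖ < r
    · have hxB : x ∈ B := by simpa [hB, Metric.mem_ball, dist_zero_right] using hx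
      rw [Set.indicator_of_mem hxB, hpr x,
        Set.indicator_of_mem (by exact hx : x ∈ {x : EuclideanSpace ℝ (Fin (m + 1)) | ‖x‖ < r})]
      refine ENNReal.ofReal_le_ofReal ?_
      calc b⁻¹ * p x ≤ 2 * p x := mul_le_mul_of_nonneg_right hbinv (hp0 x)
        _ ≤ 2 * M := mul_le_mul_of_nonneg_left (hpM x) (by norm_num)
    · have hxB : x ∉ B := by simpa [hB, Metric.mem_ball, dist_zero_right] using hx
      rw [Set.indicator_of_notMem hxB, hpr x,
        Set.indicator_of_notMem (by exact hx : x ∉ {x : EuclideanSpace ℝ (Fin (m + 1)) | ‖x‖ < r})]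
      simp
  calc ∫⁻ x in A, ENNReal.ofReal (pr x)
      ≤ ∫⁻ x in A, B.indicator (fun _ => ENNReal.ofReal (2 * M)) x :=
        lintegral_mono hpoint
    _ = ENNReal.ofReal (2 * M) * volume (B ∩ A) := by
        rw [lintegral_indicator_const measurableSet_ball,
          Measure.restrict_apply measurableSet_ball]
    _ ≤ ENNReal.ofReal (2 * M) *
        (volume (Metric.ball (0 : EuclideanSpace ℝ (Fin m)) r) * volume s) := by
        refine mul_le_mul_right ?_ _
        refine le_trans (measure_mono ?_) (slab_vol_le m r hr s hs θ hθ)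
        intro x hx
        exact ⟨hx.2, by simpa [hB, Metric.mem_ball, dist_zero_right] using hx.1⟩
    _ ≤ ENNReal.ofReal (2 * ω * r ^ (m + 1 - 1) * M) * volume s := by
        rw [EuclideanSpace.volume_ball]
        have hωeq : Real.sqrt Real.pi ^ Fintype.card (Fin m)
            / Real.Gamma ((Fintype.card (Fin m)) / 2 + 1) = ω := by
          rw [hω]
          have h1 : ((m : ℝ) + 1) - 1 = (m : ℝ) := by ring
          rw [Fintype.card_fin]
          push_cast
          rw [h1]
          congr 1
          rw [Real.sqrt_eq_rpow, ← Real.rpow_natCast (Real.pi ^ ((1:ℝ)/2)) m,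
            ← Real.rpow_mul Real.pi_pos.le]
          congr 1
          ring
        rw [hωeq, Fintype.card_fin, ← ENNReal.ofReal_pow hr.le,
          ← ENNReal.ofReal_mul (pow_nonneg hr.le m), ← mul_assoc,
          ← ENNReal.ofReal_mul (by linarith : (0:ℝ) ≤ 2 * M)]
        refine mul_le_mul_left (ENNReal.ofReal_le_ofReal (le_of_eq ?_)) _
        simp only [Nat.add_sub_cancel]
        ring
end

section
/- Let X_1,…,X_m (m ≥ 2) be independent random vectors in ℝ^d with bounded densities q_k ≤ M_k. Then the characteristic function f of S_m = X_1 + ⋯ + X_m is integrable, with ∫_{ℝ^d} |f(t)| dt ≤ (2π)^d (M_1 ⋯ M_m)^{1/m}. -/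
open MeasureTheory Real Complex
open scoped RealInnerProductSpace ENNReal NNReal

variable {d : ℕ}

local notation "E" => EuclideanSpace ℝ (Fin d)

lemma cont_inner_left (t : E) : Continuous (fun x : E => (inner ℝ t x : ℝ)) :=
  continuous_const.inner continuous_id

lemma meas_V_integrand (t : E) (q : E → ℝ) (hq : Measurable q) :
    Measurable (fun x : E => Complex.exp ((inner ℝ t x : ℝ) * Complex.I) * (q x : ℂ)) :=
  ((Complex.measurable_exp.comp ((Complex.measurable_ofReal.comp
      (cont_inner_left t).measurable).mul measurable_const))).mul
    (Complex.measurable_ofReal.comp hq)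

-- continuity of V
lemma cont_V (q : E → ℝ) (hq : Measurable q) (hqInt : Integrable q)
    (hq0 : ∀ x, 0 ≤ q x) :
    Continuous (fun t : E => ∫ x : E, Complex.exp ((inner ℝ t x : ℝ) * Complex.I) * (q x : ℂ)) := by
  apply continuous_of_dominated (bound := q)
  · exact fun t => (meas_V_integrand t q hq).aestronglyMeasurable
  · intro t
    filter_upwards with x
    simp only [norm_mul, Complex.norm_exp]
    simp [_root_.abs_of_nonneg (hq0 x)]
  · exact hqInt
  · filter_upwards with x
    exact (Complex.continuous_exp.comp ((Complex.continuous_ofReal.comp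
      (continuous_id.inner continuous_const)).mul continuous_const)).mul continuous_const

lemma norm_V_le_one (q : E → ℝ) (hq0 : ∀ x, 0 ≤ q x) (hqInt : Integrable q) (hq1 : ∫ x, q x = 1)
    (t : E) : ‖∫ x : E, Complex.exp ((inner ℝ t x : ℝ) * Complex.I) * (q x : ℂ)‖ ≤ 1 := by
  calc ‖∫ x : E, Complex.exp ((inner ℝ t x : ℝ) * Complex.I) * (q x : ℂ)‖
      ≤ ∫ x : E, ‖Complex.exp ((inner ℝ t x : ℝ) * Complex.I) * (q x : ℂ)‖ :=
        norm_integral_le_integral_norm _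
    _ = ∫ x : E, q x := by
        congr 1; ext x
        simp only [norm_mul, Complex.norm_exp]
        simp [_root_.abs_of_nonneg (hq0 x)]
    _ = 1 := hq1

lemma gauss_integrable {b : ℝ} (hb : 0 < b) :
    Integrable (fun t : E => rexp (-(b * ‖t‖^2))) := by
  have h := GaussianFourier.integrable_cexp_neg_mul_sq_norm_add
    (V := E) (b := (b:ℂ)) (by simpa using hb) 0 0
  have := h.norm
  refine this.congr (Filter.Eventually.of_forall fun t => ?_)
  simp only [Complex.norm_exp, zero_mul, add_zero]
  congr 1
  rw [show (-(b:ℂ) * (‖t‖:ℂ) ^ 2 : ℂ) = ((-(b * ‖t‖^2) : ℝ) : ℂ) by push_cast; ring,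
    Complex.ofReal_re]

lemma lintegral_gauss {b : ℝ} (hb : 0 < b) :
    ∫⁻ t : E, ENNReal.ofReal (rexp (-(b * ‖t‖^2))) = ENNReal.ofReal ((π/b) ^ ((d:ℝ)/2)) := by
  rw [← ofReal_integral_eq_lintegral_ofReal (gauss_integrable hb)
    (Filter.Eventually.of_forall fun t => (Real.exp_pos _).le)]
  congr 1
  have := GaussianFourier.integral_rexp_neg_mul_sq_norm (V := E) hb
  simp only [neg_mul] at this ⊢
  rw [this, finrank_euclideanSpace_fin]

lemma const_arith {ε : ℝ} (hε : 0 < ε) (d : ℕ) :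
    (π/ε) ^ ((d:ℝ)/2) * (π/(1/(4*ε))) ^ ((d:ℝ)/2) = (2*π) ^ d := by
  have h1 : (0:ℝ) ≤ π/ε := by positivity
  rw [← Real.mul_rpow h1 (by positivity)]
  have : π/ε * (π/(1/(4*ε))) = (2*π)^2 := by
    field_simp
    ring
  rw [this, ← Real.rpow_natCast (2*π) 2, ← Real.rpow_mul (by positivity),
    ← Real.rpow_natCast (2*π) d]
  congr 1
  ring

lemma eps_bound (q : E → ℝ) (hq : Measurable q) (hq0 : ∀ x, 0 ≤ q x)
    (hqInt : Integrable q) (hq1 : ∫ x, q x = 1) (Mk : ℝ) (hqM : ∀ x, q x ≤ Mk)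
    {ε : ℝ} (hε : 0 < ε) :
    ∫ t : E, rexp (-(ε * ‖t‖^2)) * ‖∫ x : E, Complex.exp ((inner ℝ t x : ℝ) * Complex.I) * (q x : ℂ)‖^2
      ≤ (2*π) ^ d * Mk := by
  set V : E → ℂ := fun t => ∫ x : E, Complex.exp ((inner ℝ t x : ℝ) * Complex.I) * (q x : ℂ) with hV
  have hMk : 0 ≤ Mk := le_trans (hq0 0) (hqM 0)
  -- the kernel function on the product space
  set F : E × (E × E) → ℂ := fun z =>
    Complex.exp (-(ε:ℂ) * ‖z.1‖^2 + ((inner ℝ (z.2.1 - z.2.2) z.1 : ℝ) : ℂ) * Complex.I)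
      * ((q z.2.1 : ℂ) * (q z.2.2 : ℂ)) with hF
  have hFnorm : ∀ z, ‖F z‖ = rexp (-(ε * ‖z.1‖^2)) * (q z.2.1 * q z.2.2) := by
    intro z
    have hre : (-(ε:ℂ) * (‖z.1‖:ℂ)^2 + ((inner ℝ (z.2.1 - z.2.2) z.1 : ℝ) : ℂ) * Complex.I).re
        = -(ε * ‖z.1‖^2) := by
      simp [Complex.mul_re]
      left
      norm_cast
    simp only [hF, norm_mul, Complex.norm_exp, hre, Complex.norm_real, Real.norm_eq_abs,
      _root_.abs_of_nonneg (hq0 z.2.1), _root_.abs_of_nonneg (hq0 z.2.2)]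
  have hFmeas : AEStronglyMeasurable F (volume : Measure (E × (E × E))) := by
    apply Measurable.aestronglyMeasurable
    apply Measurable.mul
    · apply Complex.measurable_exp.comp
      apply Measurable.add
      · exact (measurable_const.mul ((Complex.measurable_ofReal.comp
          (continuous_norm.measurable.comp measurable_fst)).pow measurable_const))
      · have hφ : Continuous fun z : E × E × E => (inner ℝ (z.2.1 - z.2.2) z.1 : ℝ) :=
          Continuous.inner ((continuous_fst.comp continuous_snd).sub
            (continuous_snd.comp continuous_snd)) continuous_fst
        exact (Complex.measurable_ofReal.comp hφ.measurable).mul measurable_const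
    · exact (Complex.measurable_ofReal.comp (hq.comp (measurable_fst.comp measurable_snd))).mul
        (Complex.measurable_ofReal.comp (hq.comp (measurable_snd.comp measurable_snd)))
  have hFint : Integrable F := by
    refine Integrable.mono' ((gauss_integrable hε).mul_prod (hqInt.mul_prod hqInt)) hFmeas ?_
    filter_upwards with z
    rw [hFnorm z]
  -- conjugate formula
  have hconj : ∀ t : E, (starRingEnd ℂ) (V t)
      = ∫ x : E, Complex.exp (-((inner ℝ t x : ℝ) : ℂ) * Complex.I) * (q x : ℂ) := by
    intro t
    rw [hV]
    simp only
    rw [← integral_conj]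
    congr 1
    ext x
    rw [map_mul, ← Complex.exp_conj]
    simp [Complex.conj_ofReal]
  -- pointwise expansion
  have hpoint : ∀ t : E, ((rexp (-(ε * ‖t‖^2)) * ‖V t‖^2 : ℝ) : ℂ) = ∫ p : E × E, F (t, p) := by
    intro t
    have h1 : ∀ p : E × E, F (t, p) = ((rexp (-(ε * ‖t‖^2)) : ℝ) : ℂ) *
        ((Complex.exp (((inner ℝ t p.1 : ℝ) : ℂ) * Complex.I) * (q p.1 : ℂ)) *
          (Complex.exp (-((inner ℝ t p.2 : ℝ) : ℂ) * Complex.I) * (q p.2 : ℂ))) := by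
      intro p
      have key : (-(ε:ℂ) * (‖t‖:ℂ)^2 + ((inner ℝ (p.1 - p.2) t : ℝ) : ℂ) * Complex.I)
          = ((-(ε * ‖t‖^2) : ℝ) : ℂ) + (((inner ℝ t p.1 : ℝ) : ℂ) * Complex.I
            + -((inner ℝ t p.2 : ℝ) : ℂ) * Complex.I) := by
        rw [inner_sub_left, real_inner_comm p.1 t, real_inner_comm p.2 t]
        push_cast
        ring
      rw [hF]
      simp only
      rw [key, Complex.exp_add, Complex.exp_add, Complex.ofReal_exp]
      ring
    calc ((rexp (-(ε * ‖t‖^2)) * ‖V t‖^2 : ℝ) : ℂ)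
        = ((rexp (-(ε * ‖t‖^2)) : ℝ) : ℂ) * (V t * (starRingEnd ℂ) (V t)) := by
          rw [Complex.mul_conj, Complex.normSq_eq_norm_sq]
          push_cast
          rfl
      _ = ((rexp (-(ε * ‖t‖^2)) : ℝ) : ℂ) *
          ((∫ x : E, Complex.exp (((inner ℝ t x : ℝ) : ℂ) * Complex.I) * (q x : ℂ)) *
            (∫ x : E, Complex.exp (-((inner ℝ t x : ℝ) : ℂ) * Complex.I) * (q x : ℂ))) := by
          rw [hconj t, hV]
      _ = ∫ p : E × E, F (t, p) := by
          rw [← integral_prod_mul, ← integral_const_mul]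
          exact (integral_congr_ae (Filter.Eventually.of_forall fun p => (h1 p).symm))
  -- swap integrals
  have hswap : ∫ t : E, ((rexp (-(ε * ‖t‖^2)) * ‖V t‖^2 : ℝ) : ℂ)
      = ∫ p : E × E, ∫ t : E, F (t, p) := by
    calc ∫ t : E, ((rexp (-(ε * ‖t‖^2)) * ‖V t‖^2 : ℝ) : ℂ)
        = ∫ t : E, ∫ p : E × E, F (t, p) := by
          exact integral_congr_ae (Filter.Eventually.of_forall hpoint)
      _ = ∫ p : E × E, ∫ t : E, F (t, p) := integral_integral_swap hFint
  -- inner Gaussian integral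
  have hinner : ∀ p : E × E, ∫ t : E, F (t, p)
      = ((π : ℂ)/(ε : ℂ)) ^ ((d : ℂ)/2) * Complex.exp (-((‖p.1 - p.2‖ : ℂ)^2) / (4*ε))
          * ((q p.1 : ℂ) * (q p.2 : ℂ)) := by
    intro p
    have hb : 0 < ((ε : ℂ)).re := by simpa using hε
    have hG := GaussianFourier.integral_cexp_neg_mul_sq_norm_add (V := E) hb Complex.I (p.1 - p.2)
    rw [hF]
    simp only
    rw [integral_mul_const]
    congr 1
    have : ∀ t : E, (-(ε:ℂ) * (‖t‖:ℂ)^2 + ((inner ℝ (p.1 - p.2) t : ℝ) : ℂ) * Complex.I)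
        = (-(ε:ℂ) * (‖t‖:ℂ)^2 + Complex.I * ((inner ℝ (p.1 - p.2) t : ℝ) : ℂ)) := by
      intro t; ring
    simp_rw [this]
    rw [hG, finrank_euclideanSpace_fin]
    congr 1
    rw [Complex.I_sq]
    ring
  -- the real Gaussian kernel bound
  set g : E × E → ℝ := fun p => (π/ε) ^ ((d:ℝ)/2) * rexp (-((1/(4*ε)) * ‖p.1 - p.2‖^2))
      * (q p.1 * q p.2) with hg
  have hgnn : ∀ p, 0 ≤ g p := by
    intro p
    have := hq0 p.1
    have := hq0 p.2
    positivity
  have hnormG : ∀ p : E × E, ‖((π : ℂ)/(ε : ℂ)) ^ ((d : ℂ)/2)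
      * Complex.exp (-((‖p.1 - p.2‖ : ℂ)^2) / (4*ε)) * ((q p.1 : ℂ) * (q p.2 : ℂ))‖ = g p := by
    intro p
    have h1 : ((π : ℂ)/(ε : ℂ)) = (((π/ε : ℝ)) : ℂ) := by push_cast; ring
    have h2 : (-((‖p.1 - p.2‖ : ℂ)^2) / (4*ε)) = ((-((1/(4*ε)) * ‖p.1 - p.2‖^2) : ℝ) : ℂ) := by
      push_cast
      field_simp
    rw [h1, h2]
    simp only [norm_mul, Complex.norm_exp, Complex.norm_real, Real.norm_eq_abs]
    rw [Complex.norm_cpow_eq_rpow_re_of_pos (by positivity), Complex.ofReal_re]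
    simp only [hg]
    rw [_root_.abs_of_nonneg (hq0 p.1), _root_.abs_of_nonneg (hq0 p.2)]
    norm_num
  -- measurability of g
  have hgmeas : Measurable g := by
    apply Measurable.mul
    · apply Measurable.mul measurable_const
      apply Real.measurable_exp.comp
      apply Measurable.neg
      apply Measurable.const_mul
      exact ((continuous_fst.sub continuous_snd).norm.measurable).pow measurable_const
    · exact (hq.comp measurable_fst).mul (hq.comp measurable_snd)
  -- lintegral bound for g
  have hlin : ∫⁻ p : E × E, ENNReal.ofReal (g p) ≤ ENNReal.ofReal ((2*π) ^ d * Mk) := by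
    have hC : (0:ℝ) ≤ (π/ε) ^ ((d:ℝ)/2) := by positivity
    set c1 : ℝ≥0∞ := ENNReal.ofReal ((π/ε) ^ ((d:ℝ)/2) * Mk) with hc1
    have hc1top : c1 ≠ ⊤ := ENNReal.ofReal_ne_top
    set R : E × E → ℝ≥0∞ := fun p => ENNReal.ofReal (rexp (-((1/(4*ε)) * ‖p.1 - p.2‖^2))) with hR
    have step1 : ∀ p : E × E, ENNReal.ofReal (g p) ≤ c1 * (R p * ENNReal.ofReal (q p.1)) := by
      intro p
      have hle : g p ≤ ((π/ε) ^ ((d:ℝ)/2) * Mk) *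
          (rexp (-((1/(4*ε)) * ‖p.1 - p.2‖^2)) * q p.1) := by
        rw [hg]
        simp only
        have h1 : q p.1 * q p.2 ≤ q p.1 * Mk := mul_le_mul_of_nonneg_left (hqM p.2) (hq0 p.1)
        have h2 : (π/ε) ^ ((d:ℝ)/2) * rexp (-((1/(4*ε)) * ‖p.1 - p.2‖^2)) * (q p.1 * q p.2)
            ≤ (π/ε) ^ ((d:ℝ)/2) * rexp (-((1/(4*ε)) * ‖p.1 - p.2‖^2)) * (q p.1 * Mk) :=
          mul_le_mul_of_nonneg_left h1 (by positivity)
        calc (π/ε) ^ ((d:ℝ)/2) * rexp (-((1/(4*ε)) * ‖p.1 - p.2‖^2)) * (q p.1 * q p.2)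
            ≤ (π/ε) ^ ((d:ℝ)/2) * rexp (-((1/(4*ε)) * ‖p.1 - p.2‖^2)) * (q p.1 * Mk) := h2
          _ = ((π/ε) ^ ((d:ℝ)/2) * Mk) * (rexp (-((1/(4*ε)) * ‖p.1 - p.2‖^2)) * q p.1) := by
              ring
      calc ENNReal.ofReal (g p) ≤ ENNReal.ofReal (((π/ε) ^ ((d:ℝ)/2) * Mk) *
            (rexp (-((1/(4*ε)) * ‖p.1 - p.2‖^2)) * q p.1)) := ENNReal.ofReal_le_ofReal hle
        _ = c1 * (R p * ENNReal.ofReal (q p.1)) := by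
            rw [ENNReal.ofReal_mul (by positivity), ENNReal.ofReal_mul (Real.exp_nonneg _)]
    have hRmeas : Measurable fun p : E × E => R p * ENNReal.ofReal (q p.1) := by
      apply Measurable.fun_mul
      · exact ENNReal.measurable_ofReal.comp (Real.measurable_exp.comp (Measurable.neg
          (Measurable.const_mul (((continuous_fst.sub continuous_snd).norm.measurable).pow
            measurable_const) _)))
      · exact ENNReal.measurable_ofReal.comp (hq.comp measurable_fst)
    have hinner2 : ∀ x : E, ∫⁻ y : E, ENNReal.ofReal (rexp (-((1/(4*ε)) * ‖x - y‖^2)))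
        = ENNReal.ofReal ((π/(1/(4*ε))) ^ ((d:ℝ)/2)) := by
      intro x
      have h1 : ∀ y : E, ENNReal.ofReal (rexp (-((1/(4*ε)) * ‖x - y‖^2)))
          = (fun y : E => ENNReal.ofReal (rexp (-((1/(4*ε)) * ‖y‖^2)))) (y - x) := by
        intro y
        simp only [norm_sub_rev x y]
      simp_rw [h1]
      rw [lintegral_sub_right_eq_self (fun y : E => ENNReal.ofReal (rexp (-((1/(4*ε)) * ‖y‖^2)))) x]
      exact lintegral_gauss (by positivity)
    calc ∫⁻ p : E × E, ENNReal.ofReal (g p)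
        ≤ ∫⁻ p : E × E, c1 * (R p * ENNReal.ofReal (q p.1)) := lintegral_mono step1
      _ = c1 * ∫⁻ p : E × E, R p * ENNReal.ofReal (q p.1) := lintegral_const_mul' _ _ hc1top
      _ = c1 * ∫⁻ x : E, ∫⁻ y : E, ENNReal.ofReal (rexp (-((1/(4*ε)) * ‖x - y‖^2)))
            * ENNReal.ofReal (q x) := by
          rw [Measure.volume_eq_prod, lintegral_prod _ hRmeas.aemeasurable]
      _ = c1 * ∫⁻ x : E, ENNReal.ofReal ((π/(1/(4*ε))) ^ ((d:ℝ)/2)) * ENNReal.ofReal (q x) := by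
          congr 1
          apply lintegral_congr
          intro x
          rw [lintegral_mul_const' _ _ ENNReal.ofReal_ne_top, hinner2 x]
      _ = c1 * (ENNReal.ofReal ((π/(1/(4*ε))) ^ ((d:ℝ)/2)) * ∫⁻ x : E, ENNReal.ofReal (q x)) :=
          by rw [lintegral_const_mul' _ _ ENNReal.ofReal_ne_top]
      _ = c1 * (ENNReal.ofReal ((π/(1/(4*ε))) ^ ((d:ℝ)/2)) * 1) := by
          rw [← ofReal_integral_eq_lintegral_ofReal hqInt (Filter.Eventually.of_forall hq0), hq1,
            ENNReal.ofReal_one]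
      _ = ENNReal.ofReal ((2*π) ^ d * Mk) := by
          rw [mul_one, hc1, ← ENNReal.ofReal_mul (by positivity)]
          congr 1
          rw [← const_arith hε d]
          ring
  -- finish
  have hintg : ∫ p : E × E, g p ≤ (2*π) ^ d * Mk := by
    rw [integral_eq_lintegral_of_nonneg_ae (Filter.Eventually.of_forall hgnn)
      hgmeas.aestronglyMeasurable]
    calc (∫⁻ p : E × E, ENNReal.ofReal (g p)).toReal
        ≤ (ENNReal.ofReal ((2*π) ^ d * Mk)).toReal :=
          ENNReal.toReal_mono ENNReal.ofReal_ne_top hlin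
      _ = (2*π) ^ d * Mk := ENNReal.toReal_ofReal (by positivity)
  calc ∫ t : E, rexp (-(ε * ‖t‖^2)) * ‖V t‖^2
      ≤ ‖((∫ t : E, rexp (-(ε * ‖t‖^2)) * ‖V t‖^2 : ℝ) : ℂ)‖ := by
        rw [Complex.norm_real]
        exact le_abs_self _
    _ = ‖∫ p : E × E, ((π : ℂ)/(ε : ℂ)) ^ ((d : ℂ)/2)
          * Complex.exp (-((‖p.1 - p.2‖ : ℂ)^2) / (4*ε)) * ((q p.1 : ℂ) * (q p.2 : ℂ))‖ := by
        rw [show ((∫ t : E, rexp (-(ε * ‖t‖^2)) * ‖V t‖^2 : ℝ) : ℂ)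
            = ∫ t : E, ((rexp (-(ε * ‖t‖^2)) * ‖V t‖^2 : ℝ) : ℂ) from (integral_ofReal).symm]
        rw [hswap]
        congr 1
        exact integral_congr_ae (Filter.Eventually.of_forall hinner)
    _ ≤ ∫ p : E × E, ‖((π : ℂ)/(ε : ℂ)) ^ ((d : ℂ)/2)
          * Complex.exp (-((‖p.1 - p.2‖ : ℂ)^2) / (4*ε)) * ((q p.1 : ℂ) * (q p.2 : ℂ))‖ :=
        norm_integral_le_integral_norm _
    _ = ∫ p : E × E, g p := integral_congr_ae (Filter.Eventually.of_forall hnormG)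
    _ ≤ (2*π) ^ d * Mk := hintg

lemma sq_bound (q : E → ℝ) (hq : Measurable q) (hq0 : ∀ x, 0 ≤ q x)
    (hqInt : Integrable q) (hq1 : ∫ x, q x = 1) (Mk : ℝ) (hqM : ∀ x, q x ≤ Mk) :
    ∫⁻ t : E, ((‖∫ x : E, Complex.exp ((inner ℝ t x : ℝ) * Complex.I) * (q x : ℂ)‖₊ : ℝ≥0∞))^2
      ≤ ENNReal.ofReal ((2*π) ^ d * Mk) := by
  set V : E → ℂ := fun t => ∫ x : E, Complex.exp ((inner ℝ t x : ℝ) * Complex.I) * (q x : ℂ) with hV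
  have hVcont : Continuous V := cont_V q hq hqInt hq0
  have hV1 : ∀ t, ‖V t‖ ≤ 1 := norm_V_le_one q hq0 hqInt hq1
  set φ : ℕ → E → ℝ≥0∞ := fun n t =>
    ((‖V t‖₊ : ℝ≥0∞))^2 * ENNReal.ofReal (rexp (-((1/(n+1) : ℝ) * ‖t‖^2))) with hφ
  have hφmeas : ∀ n, Measurable (φ n) := by
    intro n
    apply Measurable.fun_mul
    · exact ((hVcont.nnnorm.measurable).coe_nnreal_ennreal).pow measurable_const
    · exact ENNReal.measurable_ofReal.comp (Real.measurable_exp.comp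
        ((continuous_norm.measurable.pow measurable_const).const_mul _).neg)
  have hφmono : Monotone φ := by
    intro n m hnm t
    apply mul_le_mul_right
    apply ENNReal.ofReal_le_ofReal
    apply Real.exp_le_exp.2
    rw [neg_le_neg_iff]
    apply mul_le_mul_of_nonneg_right _ (by positivity)
    apply one_div_le_one_div_of_le (by positivity)
    have : (n:ℝ) ≤ m := Nat.cast_le.2 hnm
    linarith
  have hsup : ∀ t, ⨆ n, φ n t = ((‖V t‖₊ : ℝ≥0∞))^2 := by
    intro t
    rw [hφ]
    simp only
    rw [← ENNReal.mul_iSup]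
    have : ⨆ n : ℕ, ENNReal.ofReal (rexp (-((1/(n+1) : ℝ) * ‖t‖^2))) = 1 := by
      apply iSup_eq_of_tendsto
      · intro n m hnm
        apply ENNReal.ofReal_le_ofReal
        apply Real.exp_le_exp.2
        rw [neg_le_neg_iff]
        apply mul_le_mul_of_nonneg_right _ (by positivity)
        apply one_div_le_one_div_of_le (by positivity)
        have : (n:ℝ) ≤ m := Nat.cast_le.2 hnm
        linarith
      · have h0 : Filter.Tendsto (fun n : ℕ => -((1/(n+1) : ℝ) * ‖t‖^2)) Filter.atTop (nhds 0) := by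
          have := (tendsto_one_div_add_atTop_nhds_zero_nat).mul_const (‖t‖^2)
          simpa using this.neg
        have := (Real.continuous_exp.tendsto 0).comp h0
        rw [Real.exp_zero] at this
        have h2 := (ENNReal.continuous_ofReal.tendsto 1).comp this
        simpa [Function.comp_def] using h2
    rw [this, mul_one]
  have hcalc : ∫⁻ t, ((‖V t‖₊ : ℝ≥0∞))^2 = ⨆ n, ∫⁻ t, φ n t := by
    rw [← lintegral_iSup hφmeas hφmono]
    exact lintegral_congr fun t => (hsup t).symm
  rw [hcalc]
  apply iSup_le
  intro n
  have hε : (0:ℝ) < 1/(n+1) := by positivity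
  have hInt2 : Integrable (fun t : E => rexp (-((1/(n+1):ℝ) * ‖t‖^2)) * ‖V t‖^2) := by
    refine Integrable.mono' (gauss_integrable hε) ?_ ?_
    · exact (((Real.continuous_exp.comp
        (continuous_const.mul (continuous_norm.pow 2)).neg)).mul
        ((hVcont.norm).pow 2)).aestronglyMeasurable
    · filter_upwards with t
      rw [Real.norm_eq_abs, _root_.abs_of_nonneg (by positivity)]
      calc rexp (-((1/(n+1):ℝ) * ‖t‖^2)) * ‖V t‖^2
          ≤ rexp (-((1/(n+1):ℝ) * ‖t‖^2)) * 1 := by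
            apply mul_le_mul_of_nonneg_left _ (Real.exp_nonneg _)
            calc ‖V t‖^2 ≤ 1^2 := pow_le_pow_left₀ (norm_nonneg _) (hV1 t) 2
              _ = 1 := one_pow 2
        _ = rexp (-((1/(n+1):ℝ) * ‖t‖^2)) := mul_one _
  have heq : ∫⁻ t, φ n t = ENNReal.ofReal (∫ t : E, rexp (-((1/(n+1):ℝ) * ‖t‖^2)) * ‖V t‖^2) := by
    rw [ofReal_integral_eq_lintegral_ofReal hInt2 (Filter.Eventually.of_forall fun t => by
      positivity)]
    apply lintegral_congr
    intro t
    rw [hφ]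
    simp only
    rw [ENNReal.ofReal_mul (Real.exp_nonneg _), mul_comm]
    congr 1
    rw [ENNReal.ofReal_pow (norm_nonneg _), ofReal_norm, enorm_eq_nnnorm]
  rw [heq]
  exact ENNReal.ofReal_le_ofReal (eps_bound q hq hq0 hqInt hq1 Mk hqM hε)

lemma final_arith (d m : ℕ) (hm0 : (m:ℝ) ≠ 0) (M : Fin m → ℝ) (hM0 : ∀ k, 0 ≤ M k) :
    ∏ k : Fin m, ((2*π) ^ d * M k) ^ ((m:ℝ)⁻¹) = (2*π) ^ d * (∏ k, M k) ^ ((m:ℝ)⁻¹) := by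
  have hc : (0:ℝ) ≤ (2*π)^d := by positivity
  calc ∏ k : Fin m, ((2*π) ^ d * M k) ^ ((m:ℝ)⁻¹)
      = ∏ k : Fin m, ((2*π) ^ d) ^ ((m:ℝ)⁻¹) * (M k) ^ ((m:ℝ)⁻¹) :=
        Finset.prod_congr rfl fun k _ => Real.mul_rpow hc (hM0 k)
    _ = (((2*π) ^ d) ^ ((m:ℝ)⁻¹)) ^ (m:ℕ) * ∏ k : Fin m, (M k) ^ ((m:ℝ)⁻¹) := by
        rw [Finset.prod_mul_distrib, Finset.prod_const, Finset.card_univ, Fintype.card_fin]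
    _ = (2*π) ^ d * (∏ k, M k) ^ ((m:ℝ)⁻¹) := by
        rw [← Real.rpow_natCast (((2*π) ^ d) ^ ((m:ℝ)⁻¹)) m, ← Real.rpow_mul hc,
          inv_mul_cancel₀ hm0, Real.rpow_one,
          Real.finset_prod_rpow _ _ (fun k _ => hM0 k)]

/-- If `X_1,…,X_m` (`m ≥ 2`) are independent random vectors in `ℝ^d` with densities
`q_k ≤ M_k` and characteristic functions `v_k`, then the characteristic function
`f = v_1 ⋯ v_m` of the sum is integrable with
`∫ |f(t)| dt ≤ (2π)^d (M_1 ⋯ M_m)^{1/m}`. -/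
theorem charFun_prod_integrable (d m : ℕ) (hm : 2 ≤ m)
    (q : Fin m → EuclideanSpace ℝ (Fin d) → ℝ)
    (hq : ∀ k, Measurable (q k))
    (hq0 : ∀ k x, 0 ≤ q k x) (hq1 : ∀ k, ∫ x, q k x = 1)
    (M : Fin m → ℝ) (hqM : ∀ k x, q k x ≤ M k)
    (v : Fin m → EuclideanSpace ℝ (Fin d) → ℂ)
    (hv : ∀ k t, v k t = ∫ x, Complex.exp ((inner ℝ t x : ℝ) * Complex.I) * (q k x : ℂ))
    (f : EuclideanSpace ℝ (Fin d) → ℂ)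
    (hf : ∀ t, f t = ∏ k, v k t) :
    Integrable f ∧
      ∫ t, ‖f t‖ ≤ (2 * Real.pi) ^ d * (∏ k, M k) ^ ((m : ℝ)⁻¹) := by
  have hm0 : (m:ℝ) ≠ 0 := by positivity
  have hqInt : ∀ k, Integrable (q k) := by
    intro k
    by_contra h
    have := hq1 k
    rw [integral_undef h] at this
    norm_num at this
  have hM0 : ∀ k, 0 ≤ M k := fun k => le_trans (hq0 k 0) (hqM k 0)
  have hvcont : ∀ k, Continuous (v k) := by
    intro k
    rw [funext (hv k)]
    exact cont_V (q k) (hq k) (hqInt k) (hq0 k)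
  have hv1 : ∀ k t, ‖v k t‖ ≤ 1 := by
    intro k t
    rw [hv k t]
    exact norm_V_le_one (q k) (hq0 k) (hqInt k) (hq1 k) t
  have hfcont : Continuous f := by
    rw [show f = fun t => ∏ k, v k t from funext hf]
    exact continuous_finset_prod _ fun k _ => hvcont k
  have hsq : ∀ k, ∫⁻ t : EuclideanSpace ℝ (Fin d), ((‖v k t‖₊ : ℝ≥0∞))^2
      ≤ ENNReal.ofReal ((2*π) ^ d * M k) := by
    intro k
    simp_rw [hv k]
    exact sq_bound (q k) (hq k) (hq0 k) (hqInt k) (hq1 k) (M k) (hqM k)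
  have hsum : ∑ _k : Fin m, (m:ℝ)⁻¹ = 1 := by
    rw [Finset.sum_const, Finset.card_univ, Fintype.card_fin, nsmul_eq_mul]
    field_simp
  have hpoint : ∀ t : EuclideanSpace ℝ (Fin d), (‖f t‖₊ : ℝ≥0∞)
      = ∏ k, (((‖v k t‖₊ : ℝ≥0∞))^(m:ℕ)) ^ ((m:ℝ)⁻¹) := by
    intro t
    rw [hf t]
    push_cast [nnnorm_prod]
    refine Finset.prod_congr rfl (fun k _ => ?_)
    rw [← ENNReal.rpow_natCast ((‖v k t‖₊ : ℝ≥0∞)) m, ← ENNReal.rpow_mul,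
      mul_inv_cancel₀ hm0, ENNReal.rpow_one]
  have hholder : ∫⁻ t : EuclideanSpace ℝ (Fin d), (‖f t‖₊ : ℝ≥0∞)
      ≤ ∏ k, (∫⁻ t : EuclideanSpace ℝ (Fin d), ((‖v k t‖₊ : ℝ≥0∞))^(m:ℕ)) ^ ((m:ℝ)⁻¹) := by
    calc ∫⁻ t : EuclideanSpace ℝ (Fin d), (‖f t‖₊ : ℝ≥0∞)
        = ∫⁻ t : EuclideanSpace ℝ (Fin d),
            ∏ k, ((fun s => ((‖v k s‖₊ : ℝ≥0∞))^(m:ℕ)) t) ^ ((m:ℝ)⁻¹) :=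
          lintegral_congr hpoint
      _ ≤ _ := ENNReal.lintegral_prod_norm_pow_le Finset.univ
          (fun k _ => (((hvcont k).nnnorm.measurable.coe_nnreal_ennreal.pow
            measurable_const)).aemeasurable)
          hsum (fun k _ => by positivity)
  have hpow2 : ∀ k, ∫⁻ t : EuclideanSpace ℝ (Fin d), ((‖v k t‖₊ : ℝ≥0∞))^(m:ℕ)
      ≤ ∫⁻ t : EuclideanSpace ℝ (Fin d), ((‖v k t‖₊ : ℝ≥0∞))^2 := by
    intro k
    apply lintegral_mono
    intro t
    apply pow_le_pow_of_le_one (by simp) _ hm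
    rw [show (1 : ℝ≥0∞) = ((1:ℝ≥0) : ℝ≥0∞) by simp, ENNReal.coe_le_coe,
      ← norm_toNNReal, ← Real.toNNReal_one]
    exact Real.toNNReal_mono (hv1 k t)
  have hRHS0 : 0 ≤ (2*π) ^ d * (∏ k, M k) ^ ((m:ℝ)⁻¹) := by
    apply mul_nonneg (by positivity)
    exact Real.rpow_nonneg (Finset.prod_nonneg fun k _ => hM0 k) _
  have hmain : ∫⁻ t : EuclideanSpace ℝ (Fin d), (‖f t‖₊ : ℝ≥0∞)
      ≤ ENNReal.ofReal ((2*π) ^ d * (∏ k, M k) ^ ((m:ℝ)⁻¹)) := by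
    calc ∫⁻ t : EuclideanSpace ℝ (Fin d), (‖f t‖₊ : ℝ≥0∞)
        ≤ ∏ k, (∫⁻ t : EuclideanSpace ℝ (Fin d), ((‖v k t‖₊ : ℝ≥0∞))^(m:ℕ)) ^ ((m:ℝ)⁻¹) :=
          hholder
      _ ≤ ∏ k, (ENNReal.ofReal ((2*π) ^ d * M k)) ^ ((m:ℝ)⁻¹) := by
          apply Finset.prod_le_prod'
          intro k _
          exact ENNReal.rpow_le_rpow (le_trans (hpow2 k) (hsq k)) (by positivity)
      _ = ∏ k, ENNReal.ofReal (((2*π) ^ d * M k) ^ ((m:ℝ)⁻¹)) :=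
          Finset.prod_congr rfl fun k _ => ENNReal.ofReal_rpow_of_nonneg
            (mul_nonneg (by positivity) (hM0 k)) (by positivity)
      _ = ENNReal.ofReal (∏ k, ((2*π) ^ d * M k) ^ ((m:ℝ)⁻¹)) :=
          (ENNReal.ofReal_prod_of_nonneg fun k _ => Real.rpow_nonneg
            (mul_nonneg (by positivity) (hM0 k)) _).symm
      _ = ENNReal.ofReal ((2*π) ^ d * (∏ k, M k) ^ ((m:ℝ)⁻¹)) := by
          rw [final_arith d m hm0 M hM0]
  have hfInt : Integrable f := by
    refine ⟨hfcont.aestronglyMeasurable, ?_⟩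
    rw [HasFiniteIntegral]
    exact lt_of_le_of_lt hmain ENNReal.ofReal_lt_top
  refine ⟨hfInt, ?_⟩
  rw [integral_norm_eq_lintegral_enorm hfcont.aestronglyMeasurable]
  calc (∫⁻ t : EuclideanSpace ℝ (Fin d), (‖f t‖₊ : ℝ≥0∞)).toReal
      ≤ (ENNReal.ofReal ((2*π) ^ d * (∏ k, M k) ^ ((m:ℝ)⁻¹))).toReal :=
        ENNReal.toReal_mono ENNReal.ofReal_ne_top hmain
    _ = (2*π) ^ d * (∏ k, M k) ^ ((m:ℝ)⁻¹) := ENNReal.toReal_ofReal hRHS0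
end

section
/- The maximum-of-density functional is sub-multiplicative under convolution: if S_m = X_1 + ⋯ + X_m with the X_k independent random vectors in ℝ^d having bounded densities, then M(S_m) ≤ (M(X_1) ⋯ M(X_m))^{1/m}, where M(Y) denotes the essential supremum of the density of Y. -/
open MeasureTheory ProbabilityTheory
open scoped ENNReal

/-- Sub-multiplicativity of the maximum-of-density functional under convolution:
if `S_m = X_1 + ⋯ + X_m` with the `X_k` independent random vectors in `ℝ^d` having
bounded densities, then `M(S_m) ≤ (M(X_1) ⋯ M(X_m))^{1/m}`, where `M(Y)` is the
essential supremum of the density of `Y`. (The conclusion "the density of `S_m` is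
bounded by `C`" is expressed as: the distribution of `S_m` is dominated by `C` times
Lebesgue measure.) -/
theorem maxDensity_sum_le_geometric_mean (d m : ℕ) (hm : 2 ≤ m)
    {Ω : Type*} [MeasureSpace Ω] [IsProbabilityMeasure (ℙ : Measure Ω)]
    (X : Fin m → Ω → EuclideanSpace ℝ (Fin d))
    (hmeas : ∀ k, Measurable (X k))
    (hindep : iIndepFun X ℙ)
    (hpdf : ∀ k, HasPDF (X k) ℙ)
    (hbdd : ∀ k, essSup (pdf (X k) ℙ volume) volume ≠ ⊤) :
    Measure.map (fun ω => ∑ k, X k ω) ℙ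
      ≤ ((∏ k, essSup (pdf (X k) ℙ volume) volume) ^ ((m : ℝ)⁻¹)) • volume := by
  have hm0 : m ≠ 0 := by omega
  set M : Fin m → ℝ≥0∞ := fun k => essSup (pdf (X k) ℙ volume) volume with hM
  haveI : NeZero m := ⟨hm0⟩
  -- choose a minimizing index
  obtain ⟨k₀, -, hk₀⟩ := Finset.exists_min_image Finset.univ M ⟨0, Finset.mem_univ _⟩
  -- the minimum is at most the geometric mean
  have hC : M k₀ ≤ (∏ k, M k) ^ ((m : ℝ)⁻¹) := by
    have h1 : (M k₀) ^ m ≤ ∏ k, M k := by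
      calc (M k₀) ^ m = ∏ _k : Fin m, M k₀ := by
            simp [Finset.prod_const, Finset.card_univ]
        _ ≤ ∏ k, M k := Finset.prod_le_prod' fun k _ => hk₀ k (Finset.mem_univ k)
    have h2 := ENNReal.rpow_le_rpow (x := (M k₀) ^ m) (y := ∏ k, M k)
      (z := (m : ℝ)⁻¹) (by exact_mod_cast h1) (by positivity)
    calc M k₀ = ((M k₀) ^ (m : ℝ)) ^ ((m : ℝ)⁻¹) := by
          rw [← ENNReal.rpow_mul, mul_inv_cancel₀ (by exact_mod_cast hm0), ENNReal.rpow_one]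
      _ = ((M k₀) ^ m) ^ ((m : ℝ)⁻¹) := by rw [ENNReal.rpow_natCast]
      _ ≤ (∏ k, M k) ^ ((m : ℝ)⁻¹) := h2
  -- split the sum : S = A + B with B = X k₀
  set A : Ω → EuclideanSpace ℝ (Fin d) := ∑ j ∈ Finset.univ.erase k₀, X j with hA
  have hAmeas : Measurable A := by
    rw [hA, Finset.sum_fn]
    exact Finset.measurable_sum _ fun j _ => hmeas j
  haveI := hpdf k₀
  have hInd : IndepFun A (X k₀) ℙ :=
    hindep.indepFun_finsetSum_of_notMem hmeas (Finset.notMem_erase k₀ Finset.univ)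
  have hmapprod :
      Measure.map (fun ω => (A ω, X k₀ ω)) ℙ
        = (Measure.map A ℙ).prod (Measure.map (X k₀) ℙ) := by
    rw [← indepFun_iff_map_prod_eq_prod_map_map hAmeas.aemeasurable
      (hmeas k₀).aemeasurable]
    exact hInd
  have hSeq : (fun ω => ∑ k, X k ω)
      = (fun p : EuclideanSpace ℝ (Fin d) × EuclideanSpace ℝ (Fin d) => p.1 + p.2)
        ∘ (fun ω => (A ω, X k₀ ω)) := by
    funext ω
    simp only [Function.comp_apply, hA, Finset.sum_apply]
    exact (Finset.sum_erase_add Finset.univ _ (Finset.mem_univ k₀)).symm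
  -- distribution of X k₀ is dominated
  have hBle : Measure.map (X k₀) ℙ ≤ (M k₀) • volume := by
    rw [map_eq_withDensity_pdf (X k₀) ℙ volume]
    calc volume.withDensity (pdf (X k₀) ℙ volume)
        ≤ volume.withDensity (fun _ => M k₀) := withDensity_mono ae_le_essSup
      _ = (M k₀) • volume := withDensity_const (M k₀)
  haveI : IsProbabilityMeasure (Measure.map A ℙ) :=
    Measure.isProbabilityMeasure_map hAmeas.aemeasurable
  -- now prove the measure inequality
  rw [Measure.le_iff]
  intro s hs
  have hadd : Measurable
      (fun p : EuclideanSpace ℝ (Fin d) × EuclideanSpace ℝ (Fin d) => p.1 + p.2) :=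
    measurable_add
  rw [hSeq, ← Measure.map_map hadd (hAmeas.prodMk (hmeas k₀)), hmapprod,
    Measure.map_apply hadd hs,
    Measure.prod_apply (hadd hs)]
  have hbound : ∀ x : EuclideanSpace ℝ (Fin d),
      (Measure.map (X k₀) ℙ) (Prod.mk x ⁻¹' ((fun p : EuclideanSpace ℝ (Fin d) ×
        EuclideanSpace ℝ (Fin d) => p.1 + p.2) ⁻¹' s)) ≤ M k₀ * volume s := by
    intro x
    have h1 : (Prod.mk x ⁻¹' ((fun p : EuclideanSpace ℝ (Fin d) ×
        EuclideanSpace ℝ (Fin d) => p.1 + p.2) ⁻¹' s)) = (fun y => x + y) ⁻¹' s := rfl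
    rw [h1]
    calc (Measure.map (X k₀) ℙ) ((fun y => x + y) ⁻¹' s)
        ≤ ((M k₀) • volume) ((fun y => x + y) ⁻¹' s) := hBle _
      _ = M k₀ * volume ((fun y => x + y) ⁻¹' s) := by
          simp [Measure.smul_apply, smul_eq_mul]
      _ = M k₀ * volume s := by rw [measure_preimage_add]
  calc ∫⁻ x, (Measure.map (X k₀) ℙ) (Prod.mk x ⁻¹' ((fun p : EuclideanSpace ℝ (Fin d) ×
        EuclideanSpace ℝ (Fin d) => p.1 + p.2) ⁻¹' s)) ∂(Measure.map A ℙ)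
      ≤ ∫⁻ _, M k₀ * volume s ∂(Measure.map A ℙ) := lintegral_mono hbound
    _ = M k₀ * volume s := by simp
    _ ≤ (∏ k, M k) ^ ((m : ℝ)⁻¹) * volume s :=
        mul_le_mul_left hC _
    _ = ((∏ k, M k) ^ ((m : ℝ)⁻¹) • volume) s := by
        simp [Measure.smul_apply, smul_eq_mul]
end

section
/- For x ≥ 1/2, √(2e) (x/e)^x ≤ Γ(x + 1/2) ≤ √(2π) (x/e)^x. -/
open Real Filter Set Topology Nat

/-- The digamma function `Γ'/Γ`. -/
noncomputable def batirPsi (t : ℝ) : ℝ := deriv Real.Gamma t / Real.Gamma t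

lemma batir_hasDerivAt_logGamma {t : ℝ} (ht : 0 < t) :
    HasDerivAt (fun u => Real.log (Real.Gamma u)) (batirPsi t) t := by
  have hne : ∀ m : ℕ, t ≠ -m := fun m =>
    (((neg_nonpos).mpr (Nat.cast_nonneg m)).trans_lt ht).ne'
  have hd : DifferentiableAt ℝ Real.Gamma t := Real.differentiableAt_Gamma hne
  exact hd.hasDerivAt.log (Real.Gamma_pos_of_pos ht).ne'

lemma batir_logGamma_add_one {t : ℝ} (ht : 0 < t) :
    Real.log (Real.Gamma (t + 1)) = Real.log t + Real.log (Real.Gamma t) := by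
  rw [Real.Gamma_add_one ht.ne', Real.log_mul ht.ne' (Real.Gamma_pos_of_pos ht).ne']

lemma batir_psi_le_log {t : ℝ} (ht : 0 < t) : batirPsi t ≤ Real.log t := by
  have h := Real.convexOn_log_Gamma.le_slope_of_hasDerivAt (mem_Ioi.2 ht)
    (mem_Ioi.2 (by linarith : (0:ℝ) < t + 1)) (lt_add_one t) (batir_hasDerivAt_logGamma ht)
  rw [slope_def_field] at h
  calc batirPsi t ≤ _ := h
    _ = Real.log t := by
        simp only [Function.comp_apply]
        rw [batir_logGamma_add_one ht]
        field_simp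
        ring

lemma batir_log_le_psi {t : ℝ} (ht : 0 < t) : Real.log t ≤ batirPsi (t + 1) := by
  have h := Real.convexOn_log_Gamma.slope_le_of_hasDerivAt (mem_Ioi.2 ht)
    (mem_Ioi.2 (by linarith : (0:ℝ) < t + 1)) (lt_add_one t)
    (batir_hasDerivAt_logGamma (by linarith : (0:ℝ) < t + 1))
  rw [slope_def_field] at h
  calc Real.log t = _ := by
        simp only [Function.comp_apply]
        rw [batir_logGamma_add_one ht]; field_simp; ring
    _ ≤ batirPsi (t + 1) := h

lemma batir_psi_add_one {t : ℝ} (ht : 0 < t) : batirPsi (t + 1) = batirPsi t + 1 / t := by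
  have h1 : HasDerivAt (fun u => Real.log (Real.Gamma (u + 1))) (batirPsi (t + 1)) t := by
    have := (batir_hasDerivAt_logGamma (by linarith : (0:ℝ) < t + 1)).comp t
      ((hasDerivAt_id t).add_const 1)
    simp at this; exact this
  have h2 : HasDerivAt (fun u => Real.log u + Real.log (Real.Gamma u))
      (1 / t + batirPsi t) t := by
    have := (Real.hasDerivAt_log ht.ne').add (batir_hasDerivAt_logGamma ht)
    simp only [one_div]; exact this
  have hev : (fun u => Real.log (Real.Gamma (u + 1)))
      =ᶠ[nhds t] fun u => Real.log u + Real.log (Real.Gamma u) := by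
    filter_upwards [eventually_gt_nhds ht] with u hu
    exact batir_logGamma_add_one hu
  have h3 : HasDerivAt (fun u => Real.log (Real.Gamma (u + 1))) (1 / t + batirPsi t) t :=
    h2.congr_of_eventuallyEq hev
  have := h1.unique h3
  linarith

lemma batir_log_ineq_aux : ∀ u : ℝ, 0 ≤ u → 2 * u / (2 + u) ≤ Real.log (1 + u) := by
  set f : ℝ → ℝ := fun u => Real.log (1 + u) - 2 * u / (2 + u) with hf
  have hd : ∀ u : ℝ, 0 ≤ u → HasDerivAt f (1 / (1 + u) - 4 / (2 + u) ^ 2) u := by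
    intro u hu
    have h1 : HasDerivAt (fun v : ℝ => Real.log (1 + v)) (1 / (1 + u)) u := by
      have := ((hasDerivAt_id u).const_add 1).log (by positivity : (1:ℝ) + u ≠ 0)
      simpa using this
    have h2 : HasDerivAt (fun v : ℝ => 2 * v / (2 + v)) (4 / (2 + u) ^ 2) u := by
      have hne : (2:ℝ) + u ≠ 0 := by linarith
      have := ((hasDerivAt_id u).const_mul 2).div ((hasDerivAt_id u).const_add 2) hne
      refine this.congr_deriv ?_
      simp only [id]
      field_simp
      ring
    exact h1.sub h2
  have hmono : MonotoneOn f (Ici (0:ℝ)) := by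
    apply monotoneOn_of_deriv_nonneg (convex_Ici 0)
    · exact fun u hu => (hd u hu).continuousAt.continuousWithinAt
    · intro u hu
      rw [interior_Ici] at hu
      exact ((hd u hu.le).differentiableAt).differentiableWithinAt
    · intro u hu
      rw [interior_Ici] at hu
      replace hu := mem_Ioi.mp hu
      rw [(hd u hu.le).deriv]
      have h1 : (0:ℝ) < 1 + u := by linarith
      have h2 : (0:ℝ) < 2 + u := by linarith
      rw [div_sub_div _ _ h1.ne' (by positivity : ((2:ℝ)+u)^2 ≠ 0)]
      apply div_nonneg _ (by positivity)
      nlinarith [sq_nonneg u, hu]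
  intro u hu
  have := hmono (self_mem_Ici) (mem_Ici.2 hu) hu
  simp only [hf] at this
  simp at this
  linarith [this]

lemma batir_key_log {t : ℝ} (ht : 0 < t) :
    1 / (t + 1 / 2) ≤ Real.log (t + 1) - Real.log t := by
  have h := batir_log_ineq_aux (1 / t) (by positivity)
  have h1 : (1:ℝ) + 1 / t = (t + 1) / t := by field_simp
  rw [h1, Real.log_div (by linarith) ht.ne'] at h
  have h2 : 2 * (1 / t) / (2 + 1 / t) = 1 / (t + 1 / 2) := by
    rw [div_eq_div_iff (by positivity) (by positivity)]
    field_simp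
  linarith [h2 ▸ h]

lemma batir_F_step {t : ℝ} (ht : 0 < t) :
    batirPsi (t + 1 + 1 / 2) - Real.log (t + 1) ≤ batirPsi (t + 1 / 2) - Real.log t := by
  have h1 : batirPsi (t + 1 / 2 + 1) = batirPsi (t + 1 / 2) + 1 / (t + 1 / 2) :=
    batir_psi_add_one (by linarith)
  have h2 := batir_key_log ht
  have h3 : t + 1 + 1 / 2 = t + 1 / 2 + 1 := by ring
  rw [h3, h1]
  linarith

lemma batir_F_le {x : ℝ} (hx : 0 < x) (n : ℕ) :
    batirPsi (x + n + 1 / 2) - Real.log (x + n) ≤ batirPsi (x + 1 / 2) - Real.log x := by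
  induction n with
  | zero => simp
  | succ n ih =>
      have hxn : (0:ℝ) < x + n := by positivity
      have h := batir_F_step hxn
      have e1 : x + (n + 1 : ℕ) = x + n + 1 := by push_cast; ring
      rw [e1]
      calc batirPsi (x + ↑n + 1 + 1/2) - Real.log (x + ↑n + 1) ≤ _ := h
        _ ≤ _ := ih

lemma batir_psi_ge_log {x : ℝ} (hx : 1 / 2 < x) : Real.log x ≤ batirPsi (x + 1 / 2) := by
  rw [← sub_nonneg]
  have hx0 : 0 < x := by linarith
  have htend : Tendsto (fun n : ℕ => Real.log ((x + n - 1/2) / (x + n))) atTop (𝓝 0) := by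
    have h1 : Tendsto (fun n : ℕ => (x + n : ℝ)) atTop atTop :=
      tendsto_atTop_add_const_left _ x tendsto_natCast_atTop_atTop
    have h2 : Tendsto (fun n : ℕ => ((x + n - 1/2) / (x + n) : ℝ)) atTop (𝓝 1) := by
      have h3 : Tendsto (fun n : ℕ => (1 - (1/2) * (x + n)⁻¹ : ℝ)) atTop (𝓝 (1 - (1/2) * 0)) :=
        tendsto_const_nhds.sub (h1.inv_tendsto_atTop.const_mul _)
      rw [mul_zero, sub_zero] at h3
      apply h3.congr
      intro n
      have : (0:ℝ) < x + n := by positivity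
      field_simp
    have h4 : Tendsto Real.log (𝓝 1) (𝓝 0) := by
      simpa using (Real.continuousAt_log one_ne_zero).tendsto
    exact h4.comp h2
  apply le_of_tendsto htend
  filter_upwards with n
  have hxn : (0:ℝ) < x + n := by positivity
  have hxn2 : (0:ℝ) < x + n - 1/2 := by
    have : (0:ℝ) ≤ n := Nat.cast_nonneg n
    linarith
  rw [Real.log_div hxn2.ne' hxn.ne']
  have h5 : Real.log (x + n - 1/2) ≤ batirPsi (x + n + 1/2) := by
    have := batir_log_le_psi hxn2
    have e : x + ↑n - 1/2 + 1 = x + ↑n + 1/2 := by ring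
    rwa [e] at this
  have h6 := batir_F_le hx0 n
  linarith

noncomputable def batirG (x : ℝ) : ℝ :=
  Real.log (Real.Gamma (x + 1 / 2)) - x * Real.log x + x

lemma batir_hasDerivAt_g {x : ℝ} (hx : 0 < x) :
    HasDerivAt batirG (batirPsi (x + 1 / 2) - Real.log x) x := by
  have h1 : HasDerivAt (fun y : ℝ => Real.log (Real.Gamma (y + 1 / 2)))
      (batirPsi (x + 1 / 2)) x := by
    have := (batir_hasDerivAt_logGamma (by linarith : (0:ℝ) < x + 1/2)).comp x
      ((hasDerivAt_id x).add_const (1/2 : ℝ))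
    simp only [mul_one] at this; exact this
  have h2 : HasDerivAt (fun y : ℝ => y * Real.log y) (Real.log x + 1) x := by
    have := (hasDerivAt_id x).mul (Real.hasDerivAt_log hx.ne')
    refine this.congr_deriv ?_
    simp [hx.ne']
  have h3 := (h1.sub h2).add (hasDerivAt_id x)
  refine h3.congr_deriv ?_
  ring

lemma batir_g_mono : MonotoneOn batirG (Ici (1/2 : ℝ)) := by
  apply monotoneOn_of_deriv_nonneg (convex_Ici _)
  · intro y hy
    exact (batir_hasDerivAt_g (lt_of_lt_of_le one_half_pos hy)).continuousAt.continuousWithinAt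
  · intro y hy
    rw [interior_Ici] at hy
    replace hy := mem_Ioi.mp hy
    exact (batir_hasDerivAt_g (by linarith)).differentiableAt.differentiableWithinAt
  · intro y hy
    rw [interior_Ici] at hy
    replace hy := mem_Ioi.mp hy
    rw [(batir_hasDerivAt_g (by linarith)).deriv]
    have := batir_psi_ge_log hy
    linarith

lemma batir_g_half : batirG (1/2) = Real.log (Real.sqrt (2 * Real.exp 1)) := by
  have h1 : (1/2 : ℝ) + 1/2 = 1 := by norm_num
  rw [batirG, h1, Real.Gamma_one, Real.log_one,
    Real.log_sqrt (by positivity), Real.log_mul two_ne_zero (Real.exp_ne_zero 1),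
    Real.log_exp]
  rw [one_div, Real.log_inv]
  ring

lemma batir_g_eval {n : ℕ} (hn : 1 ≤ n) :
    batirG (n + 1/2) = Real.log (Stirling.stirlingSeq n) + (1/2) * Real.log 2 + 1/2
      - (((n:ℝ) + 1/2) * Real.log (1 + (1/2)/(n:ℝ))) := by
  have hN : (0:ℝ) < n := by exact_mod_cast hn
  have hfac : (0:ℝ) < (n ! : ℝ) := by exact_mod_cast Nat.factorial_pos n
  have hsq : (0:ℝ) < Real.sqrt (2 * n) := Real.sqrt_pos.mpr (by positivity)
  have hpow : (0:ℝ) < ((n:ℝ) / Real.exp 1) ^ n := by positivity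
  have hfac_eq : (n ! : ℝ) = Stirling.stirlingSeq n * (Real.sqrt (2 * n) * ((n:ℝ) / Real.exp 1) ^ n) := by
    rw [Stirling.stirlingSeq]
    field_simp
  have e0 : (n:ℝ) + 1/2 + 1/2 = (n:ℝ) + 1 := by ring
  have e1 : Real.log (1 + (1/2)/(n:ℝ)) = Real.log ((n:ℝ) + 1/2) - Real.log n := by
    rw [show (1:ℝ) + (1/2)/(n:ℝ) = ((n:ℝ) + 1/2)/n by field_simp,
      Real.log_div (by positivity) hN.ne']
  have e2 : Real.log (n ! : ℝ) = Real.log (Stirling.stirlingSeq n)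
      + ((1/2) * (Real.log 2 + Real.log n) + (n:ℝ) * (Real.log n - 1)) := by
    have hs : (0:ℝ) < Stirling.stirlingSeq n := by
      rw [Stirling.stirlingSeq]; positivity
    rw [hfac_eq, Real.log_mul hs.ne' (by positivity),
      Real.log_mul hsq.ne' hpow.ne', Real.log_sqrt (by positivity),
      Real.log_mul two_ne_zero hN.ne', Real.log_pow,
      Real.log_div hN.ne' (Real.exp_ne_zero 1), Real.log_exp]
    ring
  rw [batirG, e0, Real.Gamma_nat_eq_factorial, e2, e1]
  ring

lemma batir_g_lim :
    Tendsto (fun n : ℕ => batirG (n + 1/2)) atTop (𝓝 (Real.log (Real.sqrt (2 * π)))) := by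
  have hsp : (0:ℝ) < Real.sqrt π := Real.sqrt_pos.mpr Real.pi_pos
  have hlog_s : Tendsto (fun n : ℕ => Real.log (Stirling.stirlingSeq n)) atTop
      (𝓝 (Real.log (Real.sqrt π))) :=
    ((Real.continuousAt_log hsp.ne').tendsto).comp Stirling.tendsto_stirlingSeq_sqrt_pi
  have h1 : Tendsto (fun n : ℕ => (n:ℝ) * Real.log (1 + (1/2)/(n:ℝ))) atTop (𝓝 (1/2)) :=
    (Real.tendsto_mul_log_one_add_div_atTop (1/2)).comp tendsto_natCast_atTop_atTop
  have h2 : Tendsto (fun n : ℕ => Real.log (1 + (1/2)/(n:ℝ))) atTop (𝓝 0) := by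
    have hb : Tendsto (fun n : ℕ => (1 + (1/2)/(n:ℝ))) atTop (𝓝 1) := by
      have hinv : Tendsto (fun n : ℕ => ((n:ℝ))⁻¹) atTop (𝓝 0) :=
        (tendsto_natCast_atTop_atTop (R := ℝ)).inv_tendsto_atTop
      have := (hinv.const_mul (1/2 : ℝ)).const_add (1 : ℝ)
      simp only [mul_zero, add_zero] at this
      apply this.congr
      intro n
      ring
    have hlog1 : Tendsto Real.log (𝓝 1) (𝓝 0) := by
      simpa using (Real.continuousAt_log one_ne_zero).tendsto
    exact hlog1.comp hb
  have hmain : Tendsto (fun n : ℕ => Real.log (Stirling.stirlingSeq n) + (1/2) * Real.log 2 + 1/2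
      - (((n:ℝ) + 1/2) * Real.log (1 + (1/2)/(n:ℝ)))) atTop
      (𝓝 (Real.log (Real.sqrt π) + (1/2) * Real.log 2 + 1/2 - (1/2 + (1/2) * 0))) := by
    have hA : Tendsto (fun n : ℕ => ((n:ℝ) + 1/2) * Real.log (1 + (1/2)/(n:ℝ))) atTop
        (𝓝 (1/2 + (1/2) * 0)) := by
      have := h1.add (h2.const_mul (1/2 : ℝ))
      apply this.congr
      intro n; ring
    exact ((hlog_s.add_const _).add_const _).sub hA
  have hfinal : Real.log (Real.sqrt π) + (1/2) * Real.log 2 + 1/2 - (1/2 + (1/2) * 0)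
      = Real.log (Real.sqrt (2 * π)) := by
    rw [Real.log_sqrt Real.pi_pos.le, Real.log_sqrt (by positivity),
      Real.log_mul two_ne_zero Real.pi_ne_zero]
    ring
  rw [← hfinal]
  apply hmain.congr'
  filter_upwards [eventually_ge_atTop 1] with n hn
  exact (batir_g_eval hn).symm

/-- Batir's two-sided bounds: for `x ≥ 1/2`,
`√(2e) (x/e)^x ≤ Γ(x + 1/2) ≤ √(2π) (x/e)^x`. -/
theorem batir_gamma_bounds (x : ℝ) (hx : 1 / 2 ≤ x) :
    Real.sqrt (2 * Real.exp 1) * (x / Real.exp 1) ^ x ≤ Real.Gamma (x + 1 / 2) ∧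
    Real.Gamma (x + 1 / 2) ≤ Real.sqrt (2 * Real.pi) * (x / Real.exp 1) ^ x := by
  have hx0 : (0:ℝ) < x := by linarith
  have hG : (0:ℝ) < Real.Gamma (x + 1/2) := Real.Gamma_pos_of_pos (by linarith)
  have hlow : Real.log (Real.sqrt (2 * Real.exp 1)) ≤ batirG x := by
    rw [← batir_g_half]
    exact batir_g_mono (mem_Ici.2 le_rfl) (mem_Ici.2 hx) hx
  have hhigh : batirG x ≤ Real.log (Real.sqrt (2 * π)) := by
    apply ge_of_tendsto batir_g_lim
    filter_upwards [eventually_ge_atTop ⌈x⌉₊] with n hn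
    have hxn : x ≤ (n:ℝ) := le_trans (Nat.le_ceil x) (by exact_mod_cast hn)
    exact batir_g_mono (mem_Ici.2 hx) (mem_Ici.2 (by linarith)) (by linarith)
  have hE : (x / Real.exp 1) ^ x = Real.exp (x * Real.log x - x) := by
    rw [Real.rpow_def_of_pos (by positivity)]
    rw [Real.log_div hx0.ne' (Real.exp_ne_zero 1), Real.log_exp]
    ring_nf
  have hGam : Real.Gamma (x + 1/2) = Real.exp (batirG x) * Real.exp (x * Real.log x - x) := by
    rw [← Real.exp_add, batirG]
    rw [show Real.log (Real.Gamma (x + 1/2)) - x * Real.log x + x + (x * Real.log x - x)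
      = Real.log (Real.Gamma (x + 1/2)) by ring, Real.exp_log hG]
  constructor
  · rw [hE, hGam, ← Real.exp_log (Real.sqrt_pos.mpr (by positivity : (0:ℝ) < 2 * Real.exp 1))]
    exact mul_le_mul_of_nonneg_right (Real.exp_le_exp.2 hlow) (Real.exp_nonneg _)
  · rw [hE, hGam, ← Real.exp_log (Real.sqrt_pos.mpr (by positivity : (0:ℝ) < 2 * π))]
    exact mul_le_mul_of_nonneg_right (Real.exp_le_exp.2 hhigh) (Real.exp_nonneg _)
end
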